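/- arXiv:math/0504218 — 5 statements merged into one kernel-verified Lean document; each statement's English description precedes it below -/
import Mathlib

section
/- Let r ≥ 1 and let ω_1, …, ω_r be complex numbers with Re(ω_j) > 0 for all j. Then for every complex number s with Re(s) > 1, the family (ζ(s + n_1ω_1 + ⋯ + n_rω_r))_{(n_1,…,n_r) ∈ ℕ^r} is multipliable, its product Z(s,ω) is nonzero, and the function s ↦ Z(s,ω) is holomorphic on the half-plane {s : Re(s) > 1}. -/
open Complex Filter Topology

set_option maxHeartbeats 1000000


private lemma rpow_sum_prod {x : ℝ} (hx : 0 < x) {ι : Type*} (s : Finset ι) (c : ι → ℝ) :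
    x ^ (∑ j ∈ s, c j) = ∏ j ∈ s, x ^ c j := by
  classical
  induction s using Finset.induction_on with
  | empty => simp
  | insert _ _ h ih => rw [Finset.sum_insert h, Finset.prod_insert h, Real.rpow_add hx, ih]

private lemma summable_pi_pow {r : ℕ} {q : Fin r → ℝ} (h0 : ∀ j, 0 ≤ q j) (h1 : ∀ j, q j < 1) :
    Summable fun n : Fin r → ℕ => ∏ j, q j ^ n j := by
  induction r with
  | zero => exact Summable.of_finite
  | succ r ih =>
    have h := (summable_geometric_of_lt_one (h0 0) (h1 0)).mul_of_nonneg
      (ih (fun j => h0 j.succ) (fun j => h1 j.succ))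
      (fun n => pow_nonneg (h0 0) n)
      (fun n => Finset.prod_nonneg fun j _ => pow_nonneg (h0 j.succ) _)
    rw [← (Fin.consEquiv fun _ : Fin (r + 1) => ℕ).summable_iff]
    refine h.congr fun p => ?_
    simp [Fin.prod_univ_succ, Fin.consEquiv]


private lemma zeta_sub_one_bound {σ : ℝ} (hσ : 1 < σ) :
    ∃ C : ℝ, 0 ≤ C ∧ ∀ w : ℂ, σ ≤ w.re →
      ‖riemannZeta w - 1‖ ≤ C * (1 / 2 : ℝ) ^ (w.re - σ) := by
  refine ⟨∑' n : ℕ, ((n : ℝ) + 2) ^ (-σ),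
    tsum_nonneg fun n => Real.rpow_nonneg (by positivity) _, ?_⟩
  intro w hw
  have hw1 : 1 < w.re := lt_of_lt_of_le hσ hw
  have ht0 : 0 ≤ w.re - σ := sub_nonneg.2 hw
  have hsumσ : Summable fun n : ℕ => ((n : ℝ) + 2) ^ (-σ) := by
    have h1 : Summable fun n : ℕ => ((n : ℝ)) ^ (-σ) :=
      Real.summable_nat_rpow.2 (by linarith)
    have h2 := (summable_nat_add_iff 2).2 h1
    exact h2.congr fun n => by push_cast; ring_nf
  have key : ∀ n : ℕ, ‖1 / ((n : ℂ) + 2) ^ w‖ = ((n : ℝ) + 2) ^ (-w.re) := by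
    intro n
    have hpos : (0 : ℝ) < (n : ℝ) + 2 := by positivity
    rw [norm_div, norm_one, show ((n : ℂ) + 2) = ((((n : ℝ) + 2) : ℝ) : ℂ) by push_cast; ring,
      Complex.norm_cpow_eq_rpow_re_of_pos hpos, Real.rpow_neg hpos.le, one_div]
  have keyle : ∀ n : ℕ, ((n : ℝ) + 2) ^ (-w.re) ≤ ((n : ℝ) + 2) ^ (-σ) * (1 / 2 : ℝ) ^ (w.re - σ) := by
    intro n
    have hpos : (0 : ℝ) < (n : ℝ) + 2 := by positivity
    have h2 : (2 : ℝ) ≤ (n : ℝ) + 2 := by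
      have := Nat.cast_nonneg (α := ℝ) n; linarith
    have h2t : (2 : ℝ) ^ (w.re - σ) ≤ ((n : ℝ) + 2) ^ (w.re - σ) :=
      Real.rpow_le_rpow (by norm_num) h2 ht0
    have hmain : ((n : ℝ) + 2) ^ (-(w.re - σ)) ≤ (1 / 2 : ℝ) ^ (w.re - σ) := by
      rw [Real.rpow_neg hpos.le, one_div, Real.inv_rpow (by norm_num : (0:ℝ) ≤ 2)]
      exact inv_anti₀ (Real.rpow_pos_of_pos (by norm_num) _) h2t
    calc ((n : ℝ) + 2) ^ (-w.re) = ((n : ℝ) + 2) ^ (-σ) * ((n : ℝ) + 2) ^ (-(w.re - σ)) := by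
          rw [← Real.rpow_add hpos]; ring_nf
      _ ≤ ((n : ℝ) + 2) ^ (-σ) * (1 / 2 : ℝ) ^ (w.re - σ) :=
          mul_le_mul_of_nonneg_left hmain (Real.rpow_nonneg hpos.le _)
  have hsum_w : Summable fun n : ℕ => 1 / ((n : ℂ) + 1) ^ w := by
    have h1 := Complex.summable_one_div_nat_cpow.2 hw1
    have h2 := (summable_nat_add_iff 1).2 h1
    exact h2.congr fun n => by push_cast; ring_nf
  have hnorms : Summable fun n : ℕ => ‖1 / ((n : ℂ) + 2) ^ w‖ :=
    Summable.of_nonneg_of_le (fun n => norm_nonneg _)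
      (fun n => (key n).le.trans (keyle n)) (hsumσ.mul_right _)
  have heq : riemannZeta w - 1 = ∑' n : ℕ, 1 / ((n : ℂ) + 2) ^ w := by
    rw [zeta_eq_tsum_one_div_nat_add_one_cpow hw1, Summable.tsum_eq_zero_add hsum_w]
    have h0 : 1 / ((0 : ℕ) : ℂ) + 1 = 1 := by norm_num
    have hterm : ∀ n : ℕ, (1 : ℂ) / ((((n + 1 : ℕ)) : ℂ) + 1) ^ w = 1 / ((n : ℂ) + 2) ^ w := by
      intro n; push_cast; ring_nf
    simp only [Nat.cast_zero, zero_add, one_cpow, hterm]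
    ring
  rw [heq]
  refine (norm_tsum_le_tsum_norm hnorms).trans ?_
  calc (∑' n : ℕ, ‖1 / ((n : ℂ) + 2) ^ w‖)
      ≤ ∑' n : ℕ, ((n : ℝ) + 2) ^ (-σ) * (1 / 2 : ℝ) ^ (w.re - σ) :=
        Summable.tsum_le_tsum (fun n => (key n).le.trans (keyle n)) hnorms (hsumσ.mul_right _)
    _ = (∑' n : ℕ, ((n : ℝ) + 2) ^ (-σ)) * (1 / 2 : ℝ) ^ (w.re - σ) := tsum_mul_right

private lemma diffOn_finset_prod {ι : Type*} (s : Finset ι) (f : ι → ℂ → ℂ) {V : Set ℂ}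
    (h : ∀ i ∈ s, DifferentiableOn ℂ (f i) V) :
    DifferentiableOn ℂ (fun x => ∏ i ∈ s, f i x) V := by
  classical
  induction s using Finset.induction_on with
  | empty => simpa using differentiableOn_const (1 : ℂ)
  | @insert a t hi ih =>
    simp only [Finset.prod_insert hi]
    exact (h a (Finset.mem_insert_self a t)).mul
      (ih fun i hit => h i (Finset.mem_insert_of_mem hit))

private lemma master (r : ℕ) (hr : 1 ≤ r) (ω : Fin r → ℂ) (hω : ∀ j, 0 < (ω j).re)
    {σ : ℝ} (hσ : 1 < σ) :
    ∃ F : ℂ → ℂ, DifferentiableOn ℂ F {s : ℂ | σ < s.re} ∧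
      ∀ s : ℂ, σ < s.re → F s ≠ 0 ∧
        HasProd (fun n : Fin r → ℕ => riemannZeta (s + ∑ j, (n j : ℂ) * ω j)) (F s) := by
  classical
  obtain ⟨C, hC0, hC⟩ := zeta_sub_one_bound hσ
  set V : Set ℂ := {s : ℂ | σ < s.re} with hV
  have hVopen : IsOpen V := isOpen_lt continuous_const Complex.continuous_re
  set q : Fin r → ℝ := fun j => (1 / 2 : ℝ) ^ (ω j).re with hqdef
  have hq0 : ∀ j, 0 ≤ q j := fun j => Real.rpow_nonneg (by norm_num) _
  have hq1 : ∀ j, q j < 1 := fun j =>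
    Real.rpow_lt_one (by norm_num) (by norm_num) (hω j)
  -- real part computation
  have hre : ∀ (s : ℂ) (n : Fin r → ℕ),
      (s + ∑ j, (n j : ℂ) * ω j).re = s.re + ∑ j, (n j : ℝ) * (ω j).re := by
    intro s n
    rw [Complex.add_re, Complex.re_sum]
    congr 1
    exact Finset.sum_congr rfl fun j _ => by simp [Complex.mul_re]
  have hsum_nonneg : ∀ n : Fin r → ℕ, 0 ≤ ∑ j, (n j : ℝ) * (ω j).re :=
    fun n => Finset.sum_nonneg fun j _ => mul_nonneg (Nat.cast_nonneg _) (hω j).le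
  have hprodq : ∀ n : Fin r → ℕ,
      (1 / 2 : ℝ) ^ (∑ j, (n j : ℝ) * (ω j).re) = ∏ j, q j ^ n j := by
    intro n
    rw [rpow_sum_prod (by norm_num : (0:ℝ) < 1/2)]
    refine Finset.prod_congr rfl fun j _ => ?_
    rw [mul_comm, Real.rpow_mul (by norm_num : (0:ℝ) ≤ 1/2), Real.rpow_natCast]
  have hrege : ∀ s ∈ V, ∀ n : Fin r → ℕ, σ ≤ (s + ∑ j, (n j : ℂ) * ω j).re := by
    intro s hs n
    rw [hre]
    have h1 := hsum_nonneg n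
    have h2 : σ < s.re := hs
    linarith
  have hbound : ∀ s ∈ V, ∀ n : Fin r → ℕ,
      ‖riemannZeta (s + ∑ j, (n j : ℂ) * ω j) - 1‖ ≤ C * ∏ j, q j ^ n j := by
    intro s hs n
    refine (hC _ (hrege s hs n)).trans ?_
    refine mul_le_mul_of_nonneg_left ?_ hC0
    rw [hre s n, show s.re + (∑ j, (n j : ℝ) * (ω j).re) - σ
        = (s.re - σ) + ∑ j, (n j : ℝ) * (ω j).re by ring,
      Real.rpow_add (by norm_num : (0:ℝ) < 1/2), hprodq n]
    have h1 : (1 / 2 : ℝ) ^ (s.re - σ) ≤ 1 :=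
      Real.rpow_le_one (by norm_num) (by norm_num) (by have : σ < s.re := hs; linarith)
    have h2 : (0:ℝ) ≤ ∏ j, q j ^ n j :=
      Finset.prod_nonneg fun j _ => pow_nonneg (hq0 j) _
    calc (1/2:ℝ) ^ (s.re - σ) * ∏ j, q j ^ n j ≤ 1 * ∏ j, q j ^ n j :=
          mul_le_mul_of_nonneg_right h1 h2
      _ = ∏ j, q j ^ n j := one_mul _
  -- choose the finite bad set
  have hNj : ∀ j : Fin r, ∃ Nj : ℕ, ∀ m, Nj ≤ m → C * q j ^ m ≤ 1 / 2 := by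
    intro j
    have h := (tendsto_pow_atTop_nhds_zero_of_lt_one (hq0 j) (hq1 j)).const_mul C
    rw [mul_zero] at h
    have h2 : ∀ᶠ m : ℕ in atTop, C * q j ^ m ≤ 1 / 2 :=
      h.eventually (eventually_le_nhds (by norm_num))
    exact eventually_atTop.1 h2
  choose N' hN' using hNj
  set N : ℕ := Finset.univ.sup N' with hNdef
  set S : Finset (Fin r → ℕ) := Fintype.piFinset fun _ : Fin r => Finset.range N with hSdef
  have hS : ∀ n : Fin r → ℕ, n ∉ S → C * ∏ j, q j ^ n j ≤ 1 / 2 := by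
    intro n hn
    rw [hSdef, Fintype.mem_piFinset] at hn
    push_neg at hn
    obtain ⟨j, hj⟩ := hn
    rw [Finset.mem_range, not_lt] at hj
    have h1 : ∏ i, q i ^ n i ≤ q j ^ n j := by
      rw [← Finset.mul_prod_erase Finset.univ _ (Finset.mem_univ j)]
      refine mul_le_of_le_one_right (pow_nonneg (hq0 j) _) ?_
      exact Finset.prod_le_one (fun i _ => pow_nonneg (hq0 i) _)
        (fun i _ => pow_le_one₀ (hq0 i) (hq1 i).le)
    exact le_trans (mul_le_mul_of_nonneg_left h1 hC0)
      (hN' j (n j) (le_trans (Finset.le_sup (Finset.mem_univ j)) hj))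
  -- estimates on the good set
  have hz_half : ∀ s ∈ V, ∀ n : Fin r → ℕ, n ∉ S →
      ‖riemannZeta (s + ∑ j, (n j : ℂ) * ω j) - 1‖ ≤ 1 / 2 :=
    fun s hs n hn => (hbound s hs n).trans (hS n hn)
  have hzeta_re : ∀ s ∈ V, ∀ n : Fin r → ℕ, n ∉ S →
      (1 : ℝ) / 2 ≤ (riemannZeta (s + ∑ j, (n j : ℂ) * ω j)).re := by
    intro s hs n hn
    set z := riemannZeta (s + ∑ j, (n j : ℂ) * ω j) with hz
    have h1 : |(z - 1).re| ≤ ‖z - 1‖ := Complex.abs_re_le_norm _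
    rw [Complex.sub_re, Complex.one_re] at h1
    have h2 := (abs_le.1 (h1.trans (hz_half s hs n hn))).1
    linarith
  have hslit : ∀ s ∈ V, ∀ n : Fin r → ℕ, n ∉ S →
      riemannZeta (s + ∑ j, (n j : ℂ) * ω j) ∈ Complex.slitPlane := by
    intro s hs n hn
    exact Or.inl (by have := hzeta_re s hs n hn; linarith)
  have hlogle : ∀ s ∈ V, ∀ n : Fin r → ℕ, n ∉ S →
      ‖Complex.log (riemannZeta (s + ∑ j, (n j : ℂ) * ω j))‖
        ≤ 3 / 2 * (C * ∏ j, q j ^ n j) := by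
    intro s hs n hn
    set z := riemannZeta (s + ∑ j, (n j : ℂ) * ω j) with hzdef
    have h1 : z = 1 + (z - 1) := by ring
    rw [h1]
    refine (Complex.norm_log_one_add_half_le_self (hz_half s hs n hn)).trans ?_
    exact mul_le_mul_of_nonneg_left (hbound s hs n) (by norm_num)
  have hune0 : ∀ s ∈ V, ∀ n : Fin r → ℕ,
      riemannZeta (s + ∑ j, (n j : ℂ) * ω j) ≠ 0 := by
    intro s hs n
    exact riemannZeta_ne_zero_of_one_lt_re (lt_of_lt_of_le (lt_of_lt_of_le hσ (hrege s hs n)) le_rfl)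
  -- summable majorant
  have husum : Summable fun n : Fin r → ℕ => 3 / 2 * (C * ∏ j, q j ^ n j) :=
    ((summable_pi_pow hq0 hq1).mul_left C).mul_left (3 / 2)
  set X : Set (Fin r → ℕ) := (↑S : Set (Fin r → ℕ))ᶜ with hXdef
  set g : ℂ → ℂ := fun s =>
    ∑' n : X, Complex.log (riemannZeta (s + ∑ j, ((n : Fin r → ℕ) j : ℂ) * ω j)) with hgdef
  have hne1 : ∀ s ∈ V, ∀ n : Fin r → ℕ, s + ∑ j, (n j : ℂ) * ω j ≠ 1 := by
    intro s hs n h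
    have := congrArg Complex.re h
    rw [Complex.one_re] at this
    have h2 := hrege s hs n
    rw [this] at h2
    linarith
  have hzdiff : ∀ n : Fin r → ℕ, DifferentiableOn ℂ
      (fun s : ℂ => riemannZeta (s + ∑ j, (n j : ℂ) * ω j)) V := by
    intro n s hs
    have h1 : DifferentiableAt ℂ (fun t : ℂ => riemannZeta (t + ∑ j, (n j : ℂ) * ω j)) s :=
      DifferentiableAt.comp s (differentiableAt_riemannZeta (hne1 s hs n))
        (differentiableAt_id.add_const _)
    exact h1.differentiableWithinAt
  have hgdiff : DifferentiableOn ℂ g V := by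
    refine differentiableOn_tsum_of_summable_norm
      (husum.subtype (X : Set (Fin r → ℕ))) ?_ hVopen ?_
    · intro n s hs
      exact (((hzdiff n s hs).differentiableAt (hVopen.mem_nhds hs)).clog
        (hslit s hs n n.2)).differentiableWithinAt
    · intro n s hs
      exact hlogle s hs n n.2
  set F : ℂ → ℂ := fun s =>
    (∏ n ∈ S, riemannZeta (s + ∑ j, (n j : ℂ) * ω j)) * Complex.exp (g s) with hFdef
  refine ⟨F, ?_, ?_⟩
  · refine DifferentiableOn.mul ?_ hgdiff.cexp
    exact diffOn_finset_prod S _ fun n _ => hzdiff n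
  · intro s hs
    have hlogsummable : Summable fun n : X =>
        Complex.log (riemannZeta (s + ∑ j, ((n : Fin r → ℕ) j : ℂ) * ω j)) := by
      refine Summable.of_norm ?_
      refine Summable.of_nonneg_of_le (fun n => norm_nonneg _)
        (fun n => hlogle s hs n n.2) (husum.subtype _)
    have hXprod : HasProd
        (fun n : X => riemannZeta (s + ∑ j, ((n : Fin r → ℕ) j : ℂ) * ω j))
        (Complex.exp (g s)) := by
      have h1 := hlogsummable.hasSum.cexp
      have h2 : (fun n : X => Complex.exp (Complex.log
          (riemannZeta (s + ∑ j, ((n : Fin r → ℕ) j : ℂ) * ω j))))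
          = fun n : X => riemannZeta (s + ∑ j, ((n : Fin r → ℕ) j : ℂ) * ω j) :=
        funext fun n => Complex.exp_log (hune0 s hs n)
      rw [← h2]
      exact h1
    have hSprod : HasProd
        (fun n : (↑S : Set (Fin r → ℕ)) => riemannZeta (s + ∑ j, ((n : Fin r → ℕ) j : ℂ) * ω j))
        (∏ n ∈ S, riemannZeta (s + ∑ j, (n j : ℂ) * ω j)) := S.hasProd _
    refine ⟨mul_ne_zero (Finset.prod_ne_zero_iff.2 fun n _ => hune0 s hs n) (Complex.exp_ne_zero _), ?_⟩
    exact hSprod.mul_compl hXprod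

/-- For `ω₁,…,ω_r` with positive real parts and `Re s > 1`, the family
`(ζ(s + n₁ω₁ + ⋯ + n_rω_r))` over `(n₁,…,n_r) ∈ ℕ^r` is multipliable, its product is
nonzero, and the resulting function of `s` is holomorphic on `Re s > 1`. -/
theorem higherRiemannZeta_lattice_convergence (r : ℕ) (hr : 1 ≤ r) (ω : Fin r → ℂ)
    (hω : ∀ j, 0 < (ω j).re) :
    (∀ s : ℂ, 1 < s.re →
      Multipliable (fun n : Fin r → ℕ => riemannZeta (s + ∑ j, (n j : ℂ) * ω j)) ∧
      (∏' n : Fin r → ℕ, riemannZeta (s + ∑ j, (n j : ℂ) * ω j)) ≠ 0) ∧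
    DifferentiableOn ℂ
      (fun s : ℂ => ∏' n : Fin r → ℕ, riemannZeta (s + ∑ j, (n j : ℂ) * ω j))
      {s : ℂ | 1 < s.re} := by
  constructor
  · intro s hs
    set σ : ℝ := (1 + s.re) / 2 with hσdef
    have hσ1 : 1 < σ := by rw [hσdef]; linarith
    have hsσ : σ < s.re := by rw [hσdef]; linarith
    obtain ⟨F, _, hF⟩ := master r hr ω hω hσ1
    obtain ⟨hF0, hFprod⟩ := hF s hsσ
    exact ⟨⟨F s, hFprod⟩, by rw [hFprod.tprod_eq]; exact hF0⟩
  · intro s₀ hs₀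
    set σ : ℝ := (1 + s₀.re) / 2 with hσdef
    have hσ1 : 1 < σ := by rw [hσdef]; exact by simp only [Set.mem_setOf_eq] at hs₀; linarith
    have hsσ : σ < s₀.re := by simp only [Set.mem_setOf_eq] at hs₀; rw [hσdef]; linarith
    obtain ⟨F, hFdiff, hF⟩ := master r hr ω hω hσ1
    have hVopen : IsOpen {s : ℂ | σ < s.re} := isOpen_lt continuous_const Complex.continuous_re
    have hcongr : DifferentiableOn ℂ
        (fun s : ℂ => ∏' n : Fin r → ℕ, riemannZeta (s + ∑ j, (n j : ℂ) * ω j))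
        {s : ℂ | σ < s.re} :=
      hFdiff.congr fun s hs => (hF s hs).2.tprod_eq
    exact ((hcongr.differentiableAt (hVopen.mem_nhds hsσ)).differentiableWithinAt)
end

section
/- Let r ≥ 2 and let ω_1, …, ω_r be complex numbers with Re(ω_j) > 0 for all j. Then for every complex number s with Re(s) > 1, Z(s,(ω_1,…,ω_r)) = ∏_{n=0}^∞ Z(s + n·ω_r, (ω_1,…,ω_{r-1})), where the family (Z(s+n·ω_r,(ω_1,…,ω_{r-1})))_{n∈ℕ} is multipliable. -/
open Complex Filter Topology

private lemma aux_summable_rpow {a : ℝ} (ha : 1 < a) :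
    Summable (fun n : ℕ => ((n : ℝ) + 2) ^ (-a)) := by
  have h := (Real.summable_nat_rpow (p := -a)).mpr (by linarith)
  have h2 := (summable_nat_add_iff 2).mpr h
  refine h2.congr fun n => ?_
  push_cast
  ring_nf

private lemma aux_zeta_tail {w : ℂ} {a : ℝ} (ha : 1 < a) (haw : a ≤ w.re) :
    ‖riemannZeta w - 1‖ ≤ (∑' n : ℕ, ((n : ℝ) + 2) ^ (-a)) * (2 : ℝ) ^ (a - w.re) := by
  have hw : 1 < w.re := lt_of_lt_of_le ha haw
  have hS : Summable fun n : ℕ => 1 / ((n : ℂ) + 1) ^ w := by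
    have := (summable_nat_add_iff 1).mpr ((Complex.summable_one_div_nat_cpow (p := w)).mpr hw)
    refine this.congr fun n => ?_
    push_cast
    ring_nf
  have key : riemannZeta w - 1 = ∑' n : ℕ, 1 / ((n : ℂ) + 2) ^ w := by
    rw [zeta_eq_tsum_one_div_nat_add_one_cpow hw, Summable.tsum_eq_zero_add hS]
    push_cast
    rw [zero_add, one_cpow, div_one, add_sub_cancel_left]
    exact tsum_congr fun n => by ring_nf
  have hnorm : ∀ n : ℕ, ‖1 / ((n : ℂ) + 2) ^ w‖ = ((n : ℝ) + 2) ^ (-w.re) := by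
    intro n
    have hpos : (0 : ℝ) < (n : ℝ) + 2 := by positivity
    have h2 : ((n : ℂ) + 2) = (((n : ℝ) + 2 : ℝ) : ℂ) := by push_cast; ring
    rw [h2, norm_div, norm_one,
      Complex.norm_cpow_eq_rpow_re_of_pos hpos, Real.rpow_neg hpos.le, one_div]
  have hbound : ∀ n : ℕ, ((n : ℝ) + 2) ^ (-w.re)
      ≤ ((n : ℝ) + 2) ^ (-a) * (2 : ℝ) ^ (a - w.re) := by
    intro n
    have hpos : (0 : ℝ) < (n : ℝ) + 2 := by positivity
    have : ((n : ℝ) + 2) ^ (-w.re) = ((n : ℝ) + 2) ^ (-a) * ((n : ℝ) + 2) ^ (a - w.re) := by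
      rw [← Real.rpow_add hpos]; ring_nf
    rw [this]
    refine mul_le_mul_of_nonneg_left ?_ (Real.rpow_nonneg hpos.le _)
    exact Real.rpow_le_rpow_of_nonpos two_pos (by linarith [Nat.cast_nonneg (α := ℝ) n])
      (by linarith)
  have hsum2 : Summable fun n : ℕ => ((n : ℝ) + 2) ^ (-a) * (2 : ℝ) ^ (a - w.re) :=
    (aux_summable_rpow ha).mul_right _
  have hsum1 : Summable fun n : ℕ => ‖1 / ((n : ℂ) + 2) ^ w‖ := by
    refine hsum2.of_nonneg_of_le (fun n => norm_nonneg _) fun n => ?_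
    rw [hnorm n]; exact hbound n
  calc ‖riemannZeta w - 1‖ = ‖∑' n : ℕ, 1 / ((n : ℂ) + 2) ^ w‖ := by rw [key]
    _ ≤ ∑' n : ℕ, ‖1 / ((n : ℂ) + 2) ^ w‖ := norm_tsum_le_tsum_norm hsum1
    _ ≤ ∑' n : ℕ, ((n : ℝ) + 2) ^ (-a) * (2 : ℝ) ^ (a - w.re) :=
        Summable.tsum_le_tsum (fun n => by rw [hnorm n]; exact hbound n) hsum1 hsum2
    _ = (∑' n : ℕ, ((n : ℝ) + 2) ^ (-a)) * (2 : ℝ) ^ (a - w.re) := tsum_mul_right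

private lemma aux_pi_summable : ∀ (k : ℕ) (q : Fin k → ℝ), (∀ j, 0 ≤ q j) → (∀ j, q j < 1) →
    Summable fun m : Fin k → ℕ => ∏ j, q j ^ m j := by
  intro k
  induction k with
  | zero => intro q _ _; exact Summable.of_finite
  | succ k ih =>
    intro q h0 h1
    rw [← (Fin.snocEquiv (fun _ : Fin (k + 1) => ℕ)).summable_iff]
    have : (fun m : Fin (k + 1) → ℕ => ∏ j, q j ^ m j) ∘ (Fin.snocEquiv (fun _ => ℕ))
        = fun p : ℕ × (Fin k → ℕ) =>
          (q (Fin.last k)) ^ p.1 * ∏ j : Fin k, (q j.castSucc) ^ p.2 j := by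
      funext p
      simp only [Function.comp_apply, Fin.snocEquiv_apply, Fin.prod_univ_castSucc,
        Fin.snoc_castSucc, Fin.snoc_last]
      ring
    rw [this]
    have hg : Summable fun n : ℕ => q (Fin.last k) ^ n :=
      summable_geometric_of_lt_one (h0 _) (h1 _)
    have hi : Summable fun m : Fin k → ℕ => ∏ j : Fin k, q j.castSucc ^ m j :=
      ih _ (fun j => h0 _) (fun j => h1 _)
    exact Summable.mul_of_nonneg (f := fun n : ℕ => q (Fin.last k) ^ n)
      (g := fun m : Fin k → ℕ => ∏ j : Fin k, q j.castSucc ^ m j) hg hi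
      (fun n => pow_nonneg (h0 _) _)
      (fun m => Finset.prod_nonneg fun j _ => pow_nonneg (h0 _) _)

private lemma aux_finite {k : ℕ} {q : Fin k → ℝ} (h0 : ∀ j, 0 ≤ q j)
    (h1 : ∀ j, q j < 1) {ε : ℝ} (hε : 0 < ε) :
    {m : Fin k → ℕ | ε < ∏ j, q j ^ m j}.Finite := by
  have hNj : ∀ j : Fin k, ∃ N : ℕ, ∀ n ≥ N, q j ^ n < ε := fun j =>
    (((tendsto_pow_atTop_nhds_zero_of_lt_one (h0 j) (h1 j)).eventually_lt_const
      hε).exists_forall_of_atTop)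
  choose N hN using hNj
  refine Set.Finite.subset (Set.finite_Iic N) fun m hm => ?_
  simp only [Set.mem_setOf_eq] at hm
  intro j
  by_contra hj
  push_neg at hj
  have hle : ∏ i, q i ^ m i ≤ q j ^ m j := by
    calc ∏ i, q i ^ m i = q j ^ m j * ∏ i ∈ Finset.univ.erase j, q i ^ m i :=
          (Finset.mul_prod_erase _ _ (Finset.mem_univ j)).symm
      _ ≤ q j ^ m j * 1 := by
          refine mul_le_mul_of_nonneg_left ?_ (pow_nonneg (h0 j) _)
          exact Finset.prod_le_one (fun i _ => pow_nonneg (h0 i) _)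
            (fun i _ => pow_le_one₀ (h0 i) (h1 i).le)
      _ = q j ^ m j := mul_one _
  exact absurd (hm.trans_le hle) (not_lt.mpr (hN j (m j) hj.le).le)

private lemma aux_mult (k : ℕ) (s : ℂ) (hs : 1 < s.re) (ω : Fin k → ℂ)
    (hω : ∀ j, 0 < (ω j).re) :
    Multipliable fun m : Fin k → ℕ => riemannZeta (s + ∑ j, (m j : ℂ) * ω j) := by
  set q : Fin k → ℝ := fun j => (2 : ℝ) ^ (-(ω j).re) with hq
  have hq0 : ∀ j, 0 ≤ q j := fun j => (Real.rpow_pos_of_pos two_pos _).le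
  have hq1 : ∀ j, q j < 1 := fun j =>
    Real.rpow_lt_one_of_one_lt_of_neg one_lt_two (neg_lt_zero.mpr (hω j))
  set C : ℝ := ∑' n : ℕ, ((n : ℝ) + 2) ^ (-s.re) with hC
  have hC0 : 0 ≤ C := tsum_nonneg fun n => Real.rpow_nonneg (by positivity) _
  have hre : ∀ m : Fin k → ℕ,
      (s + ∑ j, (m j : ℂ) * ω j).re = s.re + ∑ j, (m j : ℝ) * (ω j).re := by
    intro m
    simp [Complex.add_re, Complex.re_sum, Complex.mul_re]
  have hge : ∀ m : Fin k → ℕ, s.re ≤ (s + ∑ j, (m j : ℂ) * ω j).re := by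
    intro m
    rw [hre m]
    refine le_add_of_nonneg_right (Finset.sum_nonneg fun j _ => ?_)
    exact mul_nonneg (Nat.cast_nonneg _) (hω j).le
  have h2 : ∀ m : Fin k → ℕ,
      (2 : ℝ) ^ (s.re - (s + ∑ j, (m j : ℂ) * ω j).re) = ∏ j, q j ^ m j := by
    intro m
    rw [hre m]
    have hsum : s.re - (s.re + ∑ j, (m j : ℝ) * (ω j).re)
        = ∑ j, (-(ω j).re) * (m j : ℝ) := by
      rw [sub_add_eq_sub_sub, sub_self, zero_sub, ← Finset.sum_neg_distrib]
      exact Finset.sum_congr rfl fun j _ => by ring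
    rw [hsum, Real.rpow_sum_of_pos two_pos]
    refine Finset.prod_congr rfl fun j _ => ?_
    rw [Real.rpow_mul (by norm_num : (0:ℝ) ≤ 2), Real.rpow_natCast]
  have hB : ∀ m : Fin k → ℕ,
      ‖riemannZeta (s + ∑ j, (m j : ℂ) * ω j) - 1‖ ≤ C * ∏ j, q j ^ m j := by
    intro m
    have := aux_zeta_tail hs (hge m)
    rwa [h2 m] at this
  have hlog : Summable fun m : Fin k → ℕ =>
      Complex.log (riemannZeta (s + ∑ j, (m j : ℂ) * ω j)) := by
    refine Summable.of_norm_bounded_eventually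
      (g := fun m => 3 / 2 * (C * ∏ j, q j ^ m j)) ?_ ?_
    · exact ((aux_pi_summable k q hq0 hq1).mul_left C).mul_left (3 / 2)
    · have hfin : {m : Fin k → ℕ | (1 : ℝ) / (2 * (C + 1)) < ∏ j, q j ^ m j}.Finite :=
        aux_finite hq0 hq1 (by positivity)
      rw [Filter.eventually_cofinite]
      refine hfin.subset fun m hm => ?_
      simp only [Set.mem_setOf_eq, not_le] at hm ⊢
      by_contra hmt
      push_neg at hmt
      apply absurd hm
      push_neg
      have hpos : (0 : ℝ) < 2 * (C + 1) := by positivity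
      have hCt : C * ∏ j, q j ^ m j ≤ 1 / 2 := by
        calc C * ∏ j, q j ^ m j ≤ C * (1 / (2 * (C + 1))) :=
              mul_le_mul_of_nonneg_left hmt hC0
          _ ≤ 1 / 2 := by rw [mul_one_div, div_le_iff₀ hpos]; nlinarith
      have hζ : ‖riemannZeta (s + ∑ j, (m j : ℂ) * ω j) - 1‖ ≤ 1 / 2 := (hB m).trans hCt
      have hrw : riemannZeta (s + ∑ j, (m j : ℂ) * ω j)
          = 1 + (riemannZeta (s + ∑ j, (m j : ℂ) * ω j) - 1) := by ring
      calc ‖Complex.log (riemannZeta (s + ∑ j, (m j : ℂ) * ω j))‖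
          = ‖Complex.log (1 + (riemannZeta (s + ∑ j, (m j : ℂ) * ω j) - 1))‖ := by rw [← hrw]
        _ ≤ 3 / 2 * ‖riemannZeta (s + ∑ j, (m j : ℂ) * ω j) - 1‖ :=
            Complex.norm_log_one_add_half_le_self hζ
        _ ≤ 3 / 2 * (C * ∏ j, q j ^ m j) :=
            mul_le_mul_of_nonneg_left (hB m) (by norm_num)
  have hP := hlog.hasSum.cexp
  have heq : (cexp ∘ fun m : Fin k → ℕ => log (riemannZeta (s + ∑ j, (m j : ℂ) * ω j)))
      = fun m : Fin k → ℕ => riemannZeta (s + ∑ j, (m j : ℂ) * ω j) :=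
    funext fun m => Complex.exp_log
      (riemannZeta_ne_zero_of_one_lt_re (lt_of_lt_of_le hs (hge m)))
  exact ⟨_, heq ▸ hP⟩


/-- For `r+1 ≥ 2` weights `ω₀,…,ω_r` with positive real parts and `Re s > 1`, the higher
Riemann zeta function of weight `(ω₀,…,ω_r)` factors as the product over `n ∈ ℕ` of the
higher Riemann zeta functions of weight `(ω₀,…,ω_{r-1})` at `s + n ω_r`, the latter
family being multipliable. -/
theorem higherRiemannZeta_lattice_peel (r : ℕ) (hr : 1 ≤ r) (ω : Fin (r + 1) → ℂ)
    (hω : ∀ j, 0 < (ω j).re) (s : ℂ) (hs : 1 < s.re) :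
    Multipliable (fun n : ℕ =>
      ∏' m : Fin r → ℕ,
        riemannZeta (s + (n : ℂ) * ω (Fin.last r) + ∑ j, (m j : ℂ) * ω j.castSucc)) ∧
    (∏' m : Fin (r + 1) → ℕ, riemannZeta (s + ∑ j, (m j : ℂ) * ω j)) =
      ∏' n : ℕ, ∏' m : Fin r → ℕ,
        riemannZeta (s + (n : ℂ) * ω (Fin.last r) + ∑ j, (m j : ℂ) * ω j.castSucc) := by
  classical
  set f : (Fin (r + 1) → ℕ) → ℂ := fun m => riemannZeta (s + ∑ j, (m j : ℂ) * ω j) with hf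
  have hM : Multipliable f := aux_mult (r + 1) s hs ω hω
  have hMe : Multipliable (f ∘ (Fin.snocEquiv (fun _ : Fin (r + 1) => ℕ))) :=
    (Equiv.multipliable_iff _).mpr hM
  have key : ∀ (n : ℕ) (m : Fin r → ℕ),
      f (Fin.snocEquiv (fun _ : Fin (r + 1) => ℕ) (n, m))
        = riemannZeta (s + (n : ℂ) * ω (Fin.last r) + ∑ j, (m j : ℂ) * ω j.castSucc) := by
    intro n m
    simp only [hf, Fin.snocEquiv_apply, Fin.sum_univ_castSucc, Fin.snoc_castSucc, Fin.snoc_last]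
    congr 1
    ring
  have hInner : ∀ n : ℕ, Multipliable fun m : Fin r → ℕ =>
      riemannZeta (s + (n : ℂ) * ω (Fin.last r) + ∑ j, (m j : ℂ) * ω j.castSucc) := by
    intro n
    have hsre : 1 < (s + (n : ℂ) * ω (Fin.last r)).re := by
      have h1 := hω (Fin.last r)
      have h2 : (0:ℝ) ≤ (n : ℝ) := Nat.cast_nonneg n
      simp only [Complex.add_re, Complex.mul_re, Complex.natCast_re, Complex.natCast_im,
        zero_mul, sub_zero]
      nlinarith
    exact aux_mult r (s + (n : ℂ) * ω (Fin.last r)) hsre (fun j => ω j.castSucc)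
      (fun j => hω _)
  have hInner' : ∀ n : ℕ, Multipliable fun m : Fin r → ℕ =>
      (f ∘ (Fin.snocEquiv (fun _ : Fin (r + 1) => ℕ))) (n, m) :=
    fun n => (hInner n).congr fun m => (key n m).symm
  constructor
  · have hsig : Multipliable fun p : Σ _ : ℕ, (Fin r → ℕ) =>
        (f ∘ (Fin.snocEquiv (fun _ : Fin (r + 1) => ℕ))) (p.1, p.2) :=
      (Equiv.sigmaEquivProd ℕ (Fin r → ℕ)).multipliable_iff.mpr hMe
    have hout := hsig.sigma' fun n => hInner' n
    exact hout.congr fun n => tprod_congr fun m => key n m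
  · calc (∏' m : Fin (r + 1) → ℕ, f m)
        = ∏' p : ℕ × (Fin r → ℕ), f (Fin.snocEquiv (fun _ : Fin (r + 1) => ℕ) p) :=
          ((Fin.snocEquiv (fun _ : Fin (r + 1) => ℕ)).tprod_eq f).symm
      _ = ∏' (n : ℕ) (m : Fin r → ℕ),
            (f ∘ (Fin.snocEquiv (fun _ : Fin (r + 1) => ℕ))) (n, m) :=
          Multipliable.tprod_prod' hMe hInner'
      _ = ∏' n : ℕ, ∏' m : Fin r → ℕ,
            riemannZeta (s + (n : ℂ) * ω (Fin.last r) + ∑ j, (m j : ℂ) * ω j.castSucc) :=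
          tprod_congr fun n => tprod_congr fun m => key n m
end

section
/- Let r ≥ 2 and let ω_1, …, ω_r be complex numbers with Re(ω_j) > 0 for all j. Then for every complex number s with Re(s) > 1, Z(s,(ω_1,…,ω_r)) = Z(s,(ω_1,…,ω_{r-1})) · Z(s + ω_r, (ω_1,…,ω_r)). -/
open Complex Filter Topology

section aux

set_option maxHeartbeats 1000000 in
/-- Summability of products over pi types. -/
lemma summable_pi_prod : ∀ (n : ℕ) (g : Fin n → ℕ → ℝ), (∀ j k, 0 ≤ g j k) →
    (∀ j, Summable (g j)) → Summable (fun m : Fin n → ℕ => ∏ j, g j (m j)) := by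
  intro n
  induction n with
  | zero =>
    intro g _ _
    exact .of_finite
  | succ n ih =>
    intro g hg0 hg
    set G : (Fin n → ℕ) → ℝ := fun m => ∏ j, g j.succ (m j) with hG
    have hGsum : Summable G := ih _ (fun j k => hg0 _ _) (fun j => hg _)
    have hG0 : ∀ m, 0 ≤ G m := fun m => Finset.prod_nonneg fun j _ => hg0 _ _
    have heq : ((fun m : Fin (n+1) → ℕ => ∏ j, g j (m j)) ∘ (Fin.consEquiv (fun _ => ℕ))) =
        fun p : ℕ × (Fin n → ℕ) => g 0 p.1 * G p.2 := by
      funext p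
      simp only [Function.comp_apply, Fin.consEquiv, hG]
      rw [Fin.prod_univ_succ]
      simp
    have hS : Summable (fun p : ℕ × (Fin n → ℕ) => g 0 p.1 * G p.2) :=
      Summable.mul_of_nonneg (hg 0) hGsum (fun k => hg0 0 k) hG0
    exact ((Fin.consEquiv (fun _ : Fin (n+1) => ℕ)).summable_iff).mp
      (hS.congr fun p => (congrFun heq p).symm)

lemma summable_two_rpow (n : ℕ) (c : Fin n → ℝ) (hc : ∀ j, 0 < c j) :
    Summable (fun m : Fin n → ℕ => (2 : ℝ) ^ (-(∑ j, (m j : ℝ) * c j))) := by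
  have key : (fun m : Fin n → ℕ => (2 : ℝ) ^ (-(∑ j, (m j : ℝ) * c j)))
      = fun m : Fin n → ℕ => ∏ j, ((2 : ℝ) ^ (-(c j))) ^ (m j) := by
    funext m
    rw [← Finset.sum_neg_distrib, Real.rpow_sum_of_pos (by norm_num)]
    refine Finset.prod_congr rfl fun j _ => ?_
    rw [← Real.rpow_natCast ((2:ℝ) ^ (-(c j))) (m j), ← Real.rpow_mul (by norm_num)]
    ring_nf
  rw [key]
  refine summable_pi_prod n _ (fun j k => pow_nonneg (Real.rpow_nonneg (by norm_num) _) _)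
    (fun j => summable_geometric_of_lt_one (Real.rpow_nonneg (by norm_num) _) ?_)
  exact Real.rpow_lt_one_of_one_lt_of_neg (by norm_num) (neg_neg_of_pos (hc j))

lemma tendsto_weighted_sum_atTop (n : ℕ) (c : Fin n → ℝ) (hc : ∀ j, 0 < c j) :
    Tendsto (fun m : Fin n → ℕ => ∑ j, (m j : ℝ) * c j) cofinite atTop := by
  rw [tendsto_atTop]
  intro T
  rw [eventually_cofinite]
  refine Set.Finite.subset (Set.Finite.pi (fun j => Set.finite_Iic (⌈T / c j⌉₊))) ?_
  intro m hm
  simp only [Set.mem_setOf_eq, not_le] at hm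
  intro j _
  simp only [Set.mem_Iic]
  have h1 : (m j : ℝ) * c j ≤ ∑ i, (m i : ℝ) * c i :=
    Finset.single_le_sum (f := fun i => (m i : ℝ) * c i)
      (fun i _ => mul_nonneg (Nat.cast_nonneg _) (hc i).le) (Finset.mem_univ j)
  have h2 : (m j : ℝ) < T / c j := (lt_div_iff₀ (hc j)).mpr (lt_of_le_of_lt h1 hm)
  have h3 : (m j : ℝ) ≤ (⌈T / c j⌉₊ : ℝ) := h2.le.trans (Nat.le_ceil _)
  exact_mod_cast h3

lemma zeta_sub_one_norm_le {σ : ℝ} (hσ : 1 < σ) {z : ℂ} (hz : σ ≤ z.re) :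
    ‖riemannZeta z - 1‖ ≤
      (∑' k : ℕ, ((k : ℝ) + 2) ^ (-σ)) * (2 : ℝ) ^ (-(z.re - σ)) := by
  have hz1 : 1 < z.re := lt_of_lt_of_le hσ hz
  have hsum : Summable fun n : ℕ => 1 / ((n : ℂ) + 1) ^ z := by
    have := (Complex.summable_one_div_nat_cpow (p := z)).mpr hz1
    have h2 := (summable_nat_add_iff 1).mpr this
    refine h2.congr fun n => ?_
    push_cast
    ring_nf
  have hζ : riemannZeta z - 1 = ∑' n : ℕ, 1 / ((n : ℂ) + 2) ^ z := by
    rw [zeta_eq_tsum_one_div_nat_add_one_cpow hz1, hsum.tsum_eq_zero_add]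
    push_cast
    rw [zero_add, one_cpow]
    simp only [div_one]
    rw [add_sub_cancel_left]
    refine tsum_congr fun n => ?_
    push_cast
    ring_nf
  have hnorm : ∀ n : ℕ, ‖1 / ((n : ℂ) + 2) ^ z‖ = ((n : ℝ) + 2) ^ (-z.re) := by
    intro n
    rw [norm_div, norm_one]
    have : ((n : ℂ) + 2) = (((n : ℝ) + 2 : ℝ) : ℂ) := by push_cast; ring
    rw [this, Complex.norm_cpow_eq_rpow_re_of_pos (by positivity)]
    rw [Real.rpow_neg (by positivity), one_div]
  have hbound : ∀ n : ℕ, ((n : ℝ) + 2) ^ (-z.re) ≤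
      ((n : ℝ) + 2) ^ (-σ) * (2 : ℝ) ^ (-(z.re - σ)) := by
    intro n
    have : ((n : ℝ) + 2) ^ (-z.re) = ((n : ℝ) + 2) ^ (-σ) * ((n : ℝ) + 2) ^ (-(z.re - σ)) := by
      rw [← Real.rpow_add (by positivity)]; ring_nf
    rw [this]
    refine mul_le_mul_of_nonneg_left ?_ (Real.rpow_nonneg (by positivity) _)
    exact Real.rpow_le_rpow_of_nonpos (by norm_num) (by linarith [Nat.cast_nonneg (α := ℝ) n])
      (by linarith)
  have hsummσ : Summable fun n : ℕ => ((n : ℝ) + 2) ^ (-σ) := by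
    have := Real.summable_nat_rpow.mpr (show -σ < -1 by linarith)
    have h2 := (summable_nat_add_iff 2).mpr this
    refine h2.congr fun n => ?_
    push_cast
    ring_nf
  have hsummz : Summable fun n : ℕ => ((n : ℝ) + 2) ^ (-z.re) := by
    have := Real.summable_nat_rpow.mpr (show -z.re < -1 by linarith)
    have h2 := (summable_nat_add_iff 2).mpr this
    refine h2.congr fun n => ?_
    push_cast
    ring_nf
  calc ‖riemannZeta z - 1‖ = ‖∑' n : ℕ, 1 / ((n : ℂ) + 2) ^ z‖ := by rw [hζ]
    _ ≤ ∑' n : ℕ, ‖1 / ((n : ℂ) + 2) ^ z‖ :=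
        norm_tsum_le_tsum_norm (by simpa only [hnorm] using hsummz)
    _ = ∑' n : ℕ, ((n : ℝ) + 2) ^ (-z.re) := tsum_congr hnorm
    _ ≤ ∑' n : ℕ, ((n : ℝ) + 2) ^ (-σ) * (2 : ℝ) ^ (-(z.re - σ)) :=
        Summable.tsum_le_tsum hbound hsummz (hsummσ.mul_right _)
    _ = (∑' k : ℕ, ((k : ℝ) + 2) ^ (-σ)) * (2 : ℝ) ^ (-(z.re - σ)) := tsum_mul_right

/-- Summability of the logs of the zeta values. -/
lemma summable_log_zeta (n : ℕ) (ω : Fin n → ℂ) (hω : ∀ j, 0 < (ω j).re) (s : ℂ)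
    (hs : 1 < s.re) :
    Summable fun m : Fin n → ℕ => Complex.log (riemannZeta (s + ∑ j, (m j : ℂ) * ω j)) := by
  set C : ℝ := ∑' k : ℕ, ((k : ℝ) + 2) ^ (-s.re) with hC
  have hC0 : 0 ≤ C := tsum_nonneg fun k => Real.rpow_nonneg (by positivity) _
  set F : (Fin n → ℕ) → ℝ := fun m => ∑ j, (m j : ℝ) * (ω j).re with hF
  have hre : ∀ m : Fin n → ℕ, (s + ∑ j, (m j : ℂ) * ω j).re = s.re + F m := by
    intro m
    simp [hF, Complex.re_sum]
  have hFs : ∀ m : Fin n → ℕ, s.re ≤ (s + ∑ j, (m j : ℂ) * ω j).re := by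
    intro m
    rw [hre]
    have : 0 ≤ F m := Finset.sum_nonneg fun j _ => mul_nonneg (Nat.cast_nonneg _) (hω j).le
    linarith
  -- eventual smallness
  have hsmall : ∀ᶠ m : (Fin n → ℕ) in cofinite, C * (2 : ℝ) ^ (-(F m)) ≤ 1 / 2 := by
    have htop := tendsto_weighted_sum_atTop n (fun j => (ω j).re) hω
    have h0 : Tendsto (fun x : ℝ => C * (2 : ℝ) ^ (-x)) atTop (nhds 0) := by
      have h1 : Tendsto (fun x : ℝ => (2 : ℝ) ^ (-x)) atTop (nhds 0) := by
        have : (fun x : ℝ => (2 : ℝ) ^ (-x)) = fun x => Real.exp (Real.log 2 * (-x)) := by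
          funext x
          rw [Real.rpow_def_of_pos (by norm_num)]
        rw [this]
        refine Real.tendsto_exp_atBot.comp ?_
        exact (tendsto_neg_atTop_atBot).const_mul_atBot (Real.log_pos (by norm_num))
      simpa using tendsto_const_nhds.mul h1
    have := (h0.comp htop).eventually_lt_const (show (0:ℝ) < 1/2 by norm_num)
    filter_upwards [this] with m hm using le_of_lt hm
  apply Summable.of_norm_bounded_eventually
    (g := fun m : Fin n → ℕ => 3 / 2 * (C * (2 : ℝ) ^ (-(F m))))
  · exact ((summable_two_rpow n _ hω).mul_left C).mul_left (3/2)
  · filter_upwards [hsmall] with m hm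
    have hb := zeta_sub_one_norm_le hs (hFs m)
    rw [hre m] at hb
    simp only [add_sub_cancel_left] at hb
    have hb2 : ‖riemannZeta (s + ∑ j, (m j : ℂ) * ω j) - 1‖ ≤ C * (2:ℝ) ^ (-(F m)) := by
      simpa [neg_sub] using hb
    have hhalf : ‖riemannZeta (s + ∑ j, (m j : ℂ) * ω j) - 1‖ ≤ 1 / 2 := hb2.trans hm
    have hlog := Complex.norm_log_one_add_half_le_self hhalf
    rw [add_sub_cancel] at hlog
    calc ‖Complex.log (riemannZeta (s + ∑ j, (m j : ℂ) * ω j))‖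
        ≤ 3 / 2 * ‖riemannZeta (s + ∑ j, (m j : ℂ) * ω j) - 1‖ := hlog
      _ ≤ 3 / 2 * (C * (2 : ℝ) ^ (-(F m))) := by
          exact mul_le_mul_of_nonneg_left hb2 (by norm_num)

lemma multipliable_of_summable_log {ι : Type*} {f : ι → ℂ} (h0 : ∀ i, f i ≠ 0)
    (h : Summable fun i => Complex.log (f i)) : Multipliable f := by
  refine ⟨Complex.exp (∑' i, Complex.log (f i)), ?_⟩
  refine (h.hasSum.cexp).congr_fun fun i => ?_
  simp only [Function.comp_apply]
  rw [Complex.exp_log (h0 i)]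

end aux

def lastZeroSet (r : ℕ) : Set (Fin (r + 1) → ℕ) := {m | m (Fin.last r) = 0}

def snocEquiv (r : ℕ) : (Fin r → ℕ) ≃ lastZeroSet r where
  toFun m := ⟨Fin.snoc m 0, by simp [lastZeroSet]⟩
  invFun x j := x.1 j.castSucc
  left_inv m := by
    funext j
    simp [Fin.snoc_castSucc]
  right_inv x := by
    ext j
    refine Fin.lastCases ?_ (fun i => ?_) j
    · simpa [Fin.snoc_last] using (x.2 : x.1 (Fin.last r) = 0).symm
    · simp [Fin.snoc_castSucc]

def shiftEquiv' (r : ℕ) : (Fin (r + 1) → ℕ) ≃ ↥(lastZeroSet r)ᶜ where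
  toFun m := ⟨fun j => m j + if j = Fin.last r then 1 else 0, by simp [lastZeroSet]⟩
  invFun x j := x.1 j - if j = Fin.last r then 1 else 0
  left_inv m := by
    funext j
    by_cases h : j = Fin.last r <;> simp [h]
  right_inv x := by
    ext j
    by_cases h : j = Fin.last r
    · subst h
      have hx : x.1 (Fin.last r) ≠ 0 := x.2
      show (x.1 (Fin.last r) - if Fin.last r = Fin.last r then 1 else 0)
          + (if Fin.last r = Fin.last r then 1 else 0) = x.1 (Fin.last r)
      rw [if_pos rfl]
      omega
    · simp [h]

/-- The ladder relation: for `r+1 ≥ 2` weights with positive real parts and `Re s > 1`,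
`Z(s,(ω₀,…,ω_r)) = Z(s,(ω₀,…,ω_{r-1})) · Z(s + ω_r,(ω₀,…,ω_r))`. -/
theorem higherRiemannZeta_ladder (r : ℕ) (hr : 1 ≤ r) (ω : Fin (r + 1) → ℂ)
    (hω : ∀ j, 0 < (ω j).re) (s : ℂ) (hs : 1 < s.re) :
    (∏' m : Fin (r + 1) → ℕ, riemannZeta (s + ∑ j, (m j : ℂ) * ω j)) =
      (∏' m : Fin r → ℕ, riemannZeta (s + ∑ j, (m j : ℂ) * ω j.castSucc)) *
        ∏' m : Fin (r + 1) → ℕ,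
          riemannZeta (s + ω (Fin.last r) + ∑ j, (m j : ℂ) * ω j) := by
  have hre : ∀ m : Fin (r+1) → ℕ, 1 < (s + ∑ j, (m j : ℂ) * ω j).re := by
    intro m
    have h1 : 0 ≤ ∑ j, (m j : ℝ) * (ω j).re :=
      Finset.sum_nonneg fun j _ => mul_nonneg (Nat.cast_nonneg _) (hω j).le
    have h2 : (s + ∑ j, (m j : ℂ) * ω j).re = s.re + ∑ j, (m j : ℝ) * (ω j).re := by
      simp [Complex.re_sum]
    rw [h2]; linarith
  have h0 : ∀ m : Fin (r+1) → ℕ,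
      riemannZeta (s + ∑ j, (m j : ℂ) * ω j) ≠ 0 :=
    fun m => riemannZeta_ne_zero_of_one_lt_re (hre m)
  have hL : Summable fun m : Fin (r+1) → ℕ =>
      Complex.log (riemannZeta (s + ∑ j, (m j : ℂ) * ω j)) :=
    summable_log_zeta (r+1) ω hω s hs
  have hMS : Multipliable ((fun m : Fin (r+1) → ℕ =>
      riemannZeta (s + ∑ j, (m j : ℂ) * ω j)) ∘ (↑) : lastZeroSet r → ℂ) :=
    multipliable_of_summable_log (fun i => h0 i) (hL.subtype _)
  have hMSc : Multipliable ((fun m : Fin (r+1) → ℕ =>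
      riemannZeta (s + ∑ j, (m j : ℂ) * ω j)) ∘ (↑) : ↥(lastZeroSet r)ᶜ → ℂ) :=
    multipliable_of_summable_log (fun i => h0 i) (hL.subtype _)
  rw [← Multipliable.tprod_mul_tprod_compl (f := fun m : Fin (r+1) → ℕ =>
      riemannZeta (s + ∑ j, (m j : ℂ) * ω j)) hMS hMSc]
  congr 1
  · rw [← (snocEquiv r).tprod_eq]
    refine tprod_congr fun m => ?_
    have hcoe : ((snocEquiv r m : lastZeroSet r) : Fin (r+1) → ℕ) = Fin.snoc m 0 := rfl
    simp only [hcoe]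
    congr 1
    rw [Fin.sum_univ_castSucc]
    simp [Fin.snoc_castSucc, Fin.snoc_last]
  · rw [← (shiftEquiv' r).tprod_eq]
    refine tprod_congr fun m => ?_
    have hcoe : ((shiftEquiv' r m : ↥(lastZeroSet r)ᶜ) : Fin (r+1) → ℕ)
        = fun j => m j + if j = Fin.last r then 1 else 0 := rfl
    simp only [hcoe]
    have hsum : ∑ j, (((m j + if j = Fin.last r then 1 else 0 : ℕ)) : ℂ) * ω j
        = (∑ j, (m j : ℂ) * ω j) + ω (Fin.last r) := by
      have hterm : ∀ j : Fin (r+1), (((m j + if j = Fin.last r then 1 else 0 : ℕ)) : ℂ) * ω j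
          = (m j : ℂ) * ω j + (if j = Fin.last r then ω j else 0) := by
        intro j
        by_cases h : j = Fin.last r <;> simp [h] <;> push_cast <;> ring
      rw [Finset.sum_congr rfl fun j _ => hterm j, Finset.sum_add_distrib,
        Finset.sum_ite_eq' Finset.univ (Fin.last r) ω]
      simp
    rw [hsum]
    congr 1
    ring
end

section
/- Let r ≥ 1 and let ω_1, …, ω_r be complex numbers with Re(ω_j) > 0 for all j. Then for every complex number s with Re(s) > 1, Z(s,ω) · ∏_{S ⊆ {1,…,r}, S ≠ ∅} Z(s + ∑_{j∈S} ω_j, ω)^{(-1)^{|S|}} = ζ(s), where the finite product runs over all nonempty subsets S of {1,…,r}. -/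
open Complex Filter Topology

private lemma hrz_rpow_finset_sum {ι : Type*} (x : ℝ) (hx : 0 < x) (s : Finset ι) (f : ι → ℝ) :
    x ^ (∑ i ∈ s, f i) = ∏ i ∈ s, x ^ (f i) := by
  classical
  induction s using Finset.cons_induction with
  | empty => simp
  | cons a s ha ih => rw [Finset.sum_cons, Finset.prod_cons, Real.rpow_add hx, ih]

private lemma hrz_pi_summable : ∀ (r : ℕ) (x : Fin r → ℝ), (∀ j, 0 ≤ x j) → (∀ j, x j < 1) →
    Summable (fun m : Fin r → ℕ => ∏ j, x j ^ m j) := by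
  intro r
  induction r with
  | zero =>
    intro x _ _
    haveI : Unique (Fin 0 → ℕ) := Pi.uniqueOfIsEmpty _
    exact Summable.of_finite
  | succ n ih =>
    intro x hx0 hx1
    have h1 : Summable (fun k : ℕ => x 0 ^ k) := summable_geometric_of_lt_one (hx0 0) (hx1 0)
    have h2 : Summable (fun m : Fin n → ℕ => ∏ j, (x j.succ) ^ m j) :=
      ih (fun j => x j.succ) (fun j => hx0 _) (fun j => hx1 _)
    have hle1 : 0 ≤ fun k : ℕ => x 0 ^ k := fun a => pow_nonneg (hx0 0) a
    have hle2 : 0 ≤ fun m : Fin n → ℕ => ∏ j, (x j.succ) ^ m j :=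
      fun m => Finset.prod_nonneg fun j _ => pow_nonneg (hx0 _) _
    have key : Summable (fun p : ℕ × (Fin n → ℕ) =>
        (x 0) ^ p.1 * ∏ j : Fin n, (x j.succ) ^ (p.2 j)) :=
      Summable.mul_of_nonneg (f := fun k : ℕ => x 0 ^ k)
        (g := fun m : Fin n → ℕ => ∏ j, (x j.succ) ^ m j) h1 h2 hle1 hle2
    have := ((Fin.consEquiv (fun _ => ℕ)).symm.summable_iff
      (f := fun p : ℕ × (Fin n → ℕ) => (x 0) ^ p.1 * ∏ j : Fin n, (x j.succ) ^ (p.2 j))).mpr key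
    refine this.congr fun m => ?_
    simp only [Function.comp]
    rw [Fin.prod_univ_succ]
    rfl

private lemma hrz_zeta_bound {σ : ℝ} (hσ : 1 < σ) {z : ℂ} (hz : σ ≤ z.re) :
    ‖riemannZeta z - 1‖ ≤ (∑' n : ℕ, ((n : ℝ) + 2) ^ (-σ)) * (2 : ℝ) ^ (σ - z.re) := by
  have hz1 : 1 < z.re := lt_of_lt_of_le hσ hz
  have hcast : ∀ (n : ℕ), ((n : ℂ) + 2) = ((n + 2 : ℕ) : ℂ) := by intro n; push_cast; ring
  have hnorm : ∀ n : ℕ, ‖1 / ((n : ℂ) + 2) ^ z‖ = ((n : ℝ) + 2) ^ (-z.re) := by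
    intro n
    rw [hcast n, norm_div, norm_one, Complex.norm_natCast_cpow_of_pos (by omega)]
    push_cast
    rw [Real.rpow_neg (by positivity), one_div]
  -- summability of the real comparison series
  have hsreal : ∀ t : ℝ, 1 < t → Summable (fun n : ℕ => ((n : ℝ) + 2) ^ (-t)) := by
    intro t ht
    have h := (Real.summable_nat_rpow (p := -t)).mpr (by linarith)
    have := h.comp_injective (add_left_injective 2)
    refine this.congr fun n => ?_
    simp only [Function.comp]
    push_cast
    ring_nf
  have hsum2 : Summable (fun n : ℕ => 1 / ((n : ℂ) + 2) ^ z) := by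
    refine Summable.of_norm ?_
    simp only [hnorm]
    exact hsreal z.re hz1
  have hc2 : ∀ n : ℕ, (((n + 1 : ℕ) : ℂ) + 1) = (n : ℂ) + 2 := by
    intro n; push_cast; ring
  have hsum1 : Summable (fun n : ℕ => 1 / ((n : ℂ) + 1) ^ z) := by
    rw [← summable_nat_add_iff 1]
    refine hsum2.congr fun n => ?_
    rw [← hc2 n]
  have hzeta : riemannZeta z - 1 = ∑' n : ℕ, 1 / ((n : ℂ) + 2) ^ z := by
    rw [zeta_eq_tsum_one_div_nat_add_one_cpow hz1, Summable.tsum_eq_zero_add hsum1]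
    have h00 : 1 / (((0 : ℕ) : ℂ) + 1) ^ z = 1 := by
      norm_num
    rw [h00, add_sub_cancel_left]
    refine tsum_congr fun n => ?_
    rw [hc2 n]
  rw [hzeta]
  calc ‖∑' n : ℕ, 1 / ((n : ℂ) + 2) ^ z‖
      ≤ ∑' n : ℕ, ‖1 / ((n : ℂ) + 2) ^ z‖ := norm_tsum_le_tsum_norm (by
        simp only [hnorm]; exact hsreal z.re hz1)
    _ = ∑' n : ℕ, ((n : ℝ) + 2) ^ (-z.re) := by simp only [hnorm]
    _ ≤ ∑' n : ℕ, ((n : ℝ) + 2) ^ (-σ) * (2 : ℝ) ^ (σ - z.re) := by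
        refine Summable.tsum_le_tsum (fun n => ?_) (hsreal z.re hz1) ?_
        · have h1 : ((n : ℝ) + 2) ^ (-z.re) = ((n : ℝ) + 2) ^ (-σ) * ((n : ℝ) + 2) ^ (σ - z.re) := by
            rw [← Real.rpow_add (by positivity)]
            ring_nf
          rw [h1]
          have h2 : ((n : ℝ) + 2) ^ (σ - z.re) ≤ (2 : ℝ) ^ (σ - z.re) :=
            Real.rpow_le_rpow_of_nonpos (by norm_num) (by linarith [Nat.cast_nonneg (α := ℝ) n])
              (by linarith)
          have h3 : (0 : ℝ) ≤ ((n : ℝ) + 2) ^ (-σ) := by positivity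
          nlinarith [h3, h2]
        · exact (hsreal σ hσ).mul_right _
    _ = (∑' n : ℕ, ((n : ℝ) + 2) ^ (-σ)) * (2 : ℝ) ^ (σ - z.re) :=
        tsum_mul_right

/-- The alternating-product functional relation:
`Z(s,ω) · ∏_{∅ ≠ S ⊆ {1,…,r}} Z(s + ∑_{j∈S} ω_j, ω)^{(-1)^{|S|}} = ζ(s)` for `Re s > 1`. -/
theorem higherRiemannZeta_alternating_product (r : ℕ) (hr : 1 ≤ r) (ω : Fin r → ℂ)
    (hω : ∀ j, 0 < (ω j).re) (s : ℂ) (hs : 1 < s.re) :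
    (∏' m : Fin r → ℕ, riemannZeta (s + ∑ j, (m j : ℂ) * ω j)) *
      ∏ S ∈ (Finset.univ : Finset (Fin r)).powerset.erase ∅,
        (∏' m : Fin r → ℕ,
          riemannZeta (s + ∑ j ∈ S, ω j + ∑ j, (m j : ℂ) * ω j)) ^ ((-1 : ℤ) ^ S.card) =
      riemannZeta s := by
  classical
  set g : (Fin r → ℕ) → ℂ := fun m => s + ∑ j, (m j : ℂ) * ω j with hg_def
  set h : (Fin r → ℕ) → ℂ := fun m => Complex.log (riemannZeta (g m)) with hh_def
  have hre : ∀ m : Fin r → ℕ, (g m).re = s.re + ∑ j, (m j : ℝ) * (ω j).re := by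
    intro m
    simp only [hg_def, Complex.add_re, Complex.re_sum, Complex.mul_re, Complex.natCast_re,
      Complex.natCast_im, zero_mul, sub_zero]
  have hre' : ∀ m : Fin r → ℕ, s.re ≤ (g m).re := by
    intro m
    rw [hre m]
    have : (0:ℝ) ≤ ∑ j, (m j : ℝ) * (ω j).re :=
      Finset.sum_nonneg fun j _ => mul_nonneg (Nat.cast_nonneg _) (hω j).le
    linarith
  have h1 : ∀ m, 1 < (g m).re := fun m => lt_of_lt_of_le hs (hre' m)
  have hzne : ∀ m, riemannZeta (g m) ≠ 0 := fun m => riemannZeta_ne_zero_of_one_lt_re (h1 m)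
  set C : ℝ := ∑' n : ℕ, ((n : ℝ) + 2) ^ (-s.re) with hC_def
  set x : Fin r → ℝ := fun j => (2 : ℝ) ^ (-(ω j).re) with hx_def
  have hx0 : ∀ j, 0 ≤ x j := fun j => (Real.rpow_pos_of_pos (by norm_num) _).le
  have hx1 : ∀ j, x j < 1 := fun j =>
    Real.rpow_lt_one_of_one_lt_of_neg (by norm_num) (by linarith [hω j])
  have hbound : ∀ m : Fin r → ℕ, ‖riemannZeta (g m) - 1‖ ≤ C * ∏ j, x j ^ m j := by
    intro m
    have hb := hrz_zeta_bound hs (hre' m)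
    have heq : (2 : ℝ) ^ (s.re - (g m).re) = ∏ j, x j ^ m j := by
      have hsn : ∑ j, (-(ω j).re) * (m j : ℝ) = -∑ j, (m j : ℝ) * (ω j).re := by
        rw [← Finset.sum_neg_distrib]
        exact Finset.sum_congr rfl fun j _ => by ring
      have h0 : s.re - (g m).re = ∑ j, (-(ω j).re) * (m j : ℝ) := by
        rw [hre m, hsn]; ring
      rw [h0, hrz_rpow_finset_sum _ (by norm_num)]
      refine Finset.prod_congr rfl fun j _ => ?_
      rw [Real.rpow_mul (by norm_num), Real.rpow_natCast]
    calc ‖riemannZeta (g m) - 1‖ ≤ C * (2 : ℝ) ^ (s.re - (g m).re) := hb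
      _ = C * ∏ j, x j ^ m j := by rw [heq]
  have hsummand : Summable (fun m : Fin r → ℕ => C * ∏ j, x j ^ m j) :=
    (hrz_pi_summable r x hx0 hx1).mul_left C
  have hsum1 : Summable (fun m : Fin r → ℕ => ‖riemannZeta (g m) - 1‖) :=
    Summable.of_nonneg_of_le (fun _ => norm_nonneg _) hbound hsummand
  -- summability of the logs
  have hlog : Summable h := by
    refine Summable.of_norm_bounded_eventually
      (g := fun m => 3 / 2 * ‖riemannZeta (g m) - 1‖) (hsum1.mul_left _) ?_
    have hev : ∀ᶠ m in Filter.cofinite, ‖riemannZeta (g m) - 1‖ ≤ 1 / 2 :=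
      hsum1.tendsto_cofinite_zero.eventually (eventually_le_nhds (by norm_num))
    filter_upwards [hev] with m hm
    have := Complex.norm_log_one_add_half_le_self (z := riemannZeta (g m) - 1) hm
    rwa [add_sub_cancel] at this
  -- the shift maps
  set χ : Finset (Fin r) → (Fin r → ℕ) := fun S j => if j ∈ S then 1 else 0 with hχ_def
  set e : Finset (Fin r) → (Fin r → ℕ) → (Fin r → ℕ) := fun S m => m + χ S with he_def
  have hinj : ∀ S, Function.Injective (e S) := fun S => add_left_injective (χ S)
  set t : Finset (Fin r) → ℂ := fun S => ∑' m : Fin r → ℕ, h (e S m) with ht_def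
  -- each shifted product equals exp (t S)
  have hprod : ∀ S, (∏' m : Fin r → ℕ, riemannZeta (g (e S m))) = Complex.exp (t S) := by
    intro S
    have hsS : Summable (fun m : Fin r → ℕ => h (e S m)) := hlog.comp_injective (hinj S)
    have hp : HasProd (fun m : Fin r → ℕ => Complex.exp (h (e S m))) (Complex.exp (t S)) :=
      hsS.hasSum.cexp
    have : (fun m : Fin r → ℕ => Complex.exp (h (e S m))) =
        fun m : Fin r → ℕ => riemannZeta (g (e S m)) := by
      funext m
      exact Complex.exp_log (hzne _)
    rw [this] at hp
    exact hp.tprod_eq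
  -- rewriting the shifted arguments
  have harg : ∀ (S : Finset (Fin r)) (m : Fin r → ℕ),
      g (e S m) = s + ∑ j ∈ S, ω j + ∑ j, (m j : ℂ) * ω j := by
    intro S m
    simp only [hg_def, he_def, hχ_def, Pi.add_apply]
    have : ∑ j, ((m j + if j ∈ S then 1 else 0 : ℕ) : ℂ) * ω j =
        (∑ j ∈ S, ω j) + ∑ j, (m j : ℂ) * ω j := by
      have heach : ∀ j, ((m j + if j ∈ S then 1 else 0 : ℕ) : ℂ) * ω j =
          (m j : ℂ) * ω j + (if j ∈ S then ω j else 0) := by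
        intro j
        by_cases hj : j ∈ S <;> simp [hj] <;> push_cast <;> ring
      rw [Finset.sum_congr rfl fun j _ => heach j, Finset.sum_add_distrib,
        Finset.sum_ite_mem, Finset.univ_inter]
      ring
    rw [this]
    ring
  -- the LHS as a single exponential
  have hε0 : ((-1 : ℤ) ^ (∅ : Finset (Fin r)).card) = 1 := by simp
  have hmem : (∅ : Finset (Fin r)) ∈ (Finset.univ : Finset (Fin r)).powerset :=
    Finset.mem_powerset.mpr (Finset.empty_subset _)
  have he0 : e ∅ = id := by
    funext m j
    simp [he_def, hχ_def]
  have hfirst : (∏' m : Fin r → ℕ, riemannZeta (s + ∑ j, (m j : ℂ) * ω j)) =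
      Complex.exp (t ∅) := by
    rw [← hprod ∅]
    exact tprod_congr fun m => by rw [he0]; rfl
  have hS : ∀ S : Finset (Fin r),
      (∏' m : Fin r → ℕ, riemannZeta (s + ∑ j ∈ S, ω j + ∑ j, (m j : ℂ) * ω j)) =
      Complex.exp (t S) := by
    intro S
    rw [← hprod S]
    exact tprod_congr fun m => by rw [harg S m]
  have hLHS : (∏' m : Fin r → ℕ, riemannZeta (s + ∑ j, (m j : ℂ) * ω j)) *
      ∏ S ∈ (Finset.univ : Finset (Fin r)).powerset.erase ∅,
        (∏' m : Fin r → ℕ,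
          riemannZeta (s + ∑ j ∈ S, ω j + ∑ j, (m j : ℂ) * ω j)) ^ ((-1 : ℤ) ^ S.card) =
      Complex.exp (∑ S ∈ (Finset.univ : Finset (Fin r)).powerset,
        (((-1 : ℤ) ^ S.card : ℤ) : ℂ) * t S) := by
    rw [hfirst]
    have hstep : ∀ S ∈ (Finset.univ : Finset (Fin r)).powerset.erase ∅,
        (∏' m : Fin r → ℕ,
          riemannZeta (s + ∑ j ∈ S, ω j + ∑ j, (m j : ℂ) * ω j)) ^ ((-1 : ℤ) ^ S.card) =
        Complex.exp ((((-1 : ℤ) ^ S.card : ℤ) : ℂ) * t S) := by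
      intro S _
      rw [hS S, Complex.exp_int_mul]
    rw [Finset.prod_congr rfl hstep, ← Complex.exp_sum, ← Complex.exp_add,
      ← Finset.add_sum_erase _ _ hmem]
    congr 1
    rw [hε0]
    push_cast
    ring
  rw [hLHS]
  -- it remains to show the sum of the coefficients times t S equals log (ζ s)
  have hkey : ∑ S ∈ (Finset.univ : Finset (Fin r)).powerset,
      (((-1 : ℤ) ^ S.card : ℤ) : ℂ) * t S = Complex.log (riemannZeta s) := by
    -- rewrite each t S as a tsum of an indicator
    have hrange : ∀ S : Finset (Fin r),
        Set.range (e S) = {n : Fin r → ℕ | ∀ j ∈ S, n j ≠ 0} := by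
      intro S
      ext n
      constructor
      · rintro ⟨m, rfl⟩ j hj
        simp [he_def, hχ_def, hj]
      · intro hn
        refine ⟨fun j => n j - χ S j, ?_⟩
        funext j
        simp only [he_def, hχ_def, Pi.add_apply]
        by_cases hj : j ∈ S
        · have := hn j hj
          simp [hj]
          omega
        · simp [hj]
    have hts : ∀ S : Finset (Fin r),
        t S = ∑' n : Fin r → ℕ, Set.indicator {n : Fin r → ℕ | ∀ j ∈ S, n j ≠ 0} h n := by
      intro S
      rw [← hrange S, ht_def]
      have h2 : ∀ m : Fin r → ℕ, h (e S m) = Set.indicator (Set.range (e S)) h (e S m) :=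
        fun m => (Set.indicator_of_mem (Set.mem_range_self m) h).symm
      simp only []
      rw [tsum_congr h2]
      refine (hinj S).tsum_eq ?_
      intro n hn
      by_contra hnr
      exact hn (Set.indicator_of_notMem hnr h)
    have hsummS : ∀ S ∈ (Finset.univ : Finset (Fin r)).powerset,
        Summable (fun n : Fin r → ℕ =>
          (((-1 : ℤ) ^ S.card : ℤ) : ℂ) *
            Set.indicator {n : Fin r → ℕ | ∀ j ∈ S, n j ≠ 0} h n) :=
      fun S _ => (hlog.indicator _).mul_left _
    calc ∑ S ∈ (Finset.univ : Finset (Fin r)).powerset,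
        (((-1 : ℤ) ^ S.card : ℤ) : ℂ) * t S
        = ∑ S ∈ (Finset.univ : Finset (Fin r)).powerset, ∑' n : Fin r → ℕ,
            (((-1 : ℤ) ^ S.card : ℤ) : ℂ) *
              Set.indicator {n : Fin r → ℕ | ∀ j ∈ S, n j ≠ 0} h n := by
          refine Finset.sum_congr rfl fun S _ => ?_
          rw [hts S, tsum_mul_left]
      _ = ∑' n : Fin r → ℕ, ∑ S ∈ (Finset.univ : Finset (Fin r)).powerset,
            (((-1 : ℤ) ^ S.card : ℤ) : ℂ) *
              Set.indicator {n : Fin r → ℕ | ∀ j ∈ S, n j ≠ 0} h n :=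
          (Summable.tsum_finsetSum hsummS).symm
      _ = ∑' n : Fin r → ℕ, (if n = 0 then h 0 else 0) := by
          refine tsum_congr fun n => ?_
          set N : Finset (Fin r) := Finset.univ.filter (fun j => n j ≠ 0) with hN_def
          have hind : ∀ S : Finset (Fin r),
              Set.indicator {n : Fin r → ℕ | ∀ j ∈ S, n j ≠ 0} h n =
              if S ∈ N.powerset then h n else 0 := by
            intro S
            by_cases hSN : S ∈ N.powerset
            · rw [if_pos hSN]
              refine Set.indicator_of_mem ?_ h
              intro j hj
              have := Finset.mem_powerset.mp hSN hj
              simp only [hN_def, Finset.mem_filter] at this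
              exact this.2
            · rw [if_neg hSN]
              refine Set.indicator_of_notMem ?_ h
              intro hmem'
              refine hSN (Finset.mem_powerset.mpr fun j hj => ?_)
              simp only [hN_def, Finset.mem_filter]
              exact ⟨Finset.mem_univ j, hmem' j hj⟩
          calc ∑ S ∈ (Finset.univ : Finset (Fin r)).powerset,
              (((-1 : ℤ) ^ S.card : ℤ) : ℂ) *
                Set.indicator {n : Fin r → ℕ | ∀ j ∈ S, n j ≠ 0} h n
              = ∑ S ∈ (Finset.univ : Finset (Fin r)).powerset,
                  (if S ∈ N.powerset then (((-1 : ℤ) ^ S.card : ℤ) : ℂ) * h n else 0) := by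
                refine Finset.sum_congr rfl fun S _ => ?_
                rw [hind S]
                by_cases hSN : S ∈ N.powerset <;> simp [hSN]
            _ = ∑ S ∈ (Finset.univ : Finset (Fin r)).powerset ∩ N.powerset,
                  (((-1 : ℤ) ^ S.card : ℤ) : ℂ) * h n := Finset.sum_ite_mem _ _ _
            _ = ∑ S ∈ N.powerset, (((-1 : ℤ) ^ S.card : ℤ) : ℂ) * h n := by
                rw [Finset.inter_eq_right.mpr
                  (Finset.powerset_mono.mpr (Finset.subset_univ N))]
            _ = ((∑ S ∈ N.powerset, (-1 : ℤ) ^ S.card : ℤ) : ℂ) * h n := by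
                rw [← Finset.sum_mul]
                push_cast
                ring
            _ = (if n = 0 then h 0 else 0) := by
                rw [Finset.sum_powerset_neg_one_pow_card]
                have hN0 : N = ∅ ↔ n = 0 := by
                  constructor
                  · intro hNe
                    funext j
                    by_contra hj
                    have hjN : j ∈ N := by
                      simp only [hN_def, Finset.mem_filter]
                      exact ⟨Finset.mem_univ j, hj⟩
                    rw [hNe] at hjN
                    exact absurd hjN (Finset.notMem_empty j)
                  · intro h0
                    rw [hN_def]
                    refine Finset.filter_eq_empty_iff.mpr ?_
                    intro j _
                    simp [h0]
                by_cases hn0 : n = 0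
                · rw [if_pos (hN0.mpr hn0), if_pos hn0, hn0]
                  push_cast
                  ring
                · rw [if_neg (fun hc => hn0 (hN0.mp hc)), if_neg hn0]
                  push_cast
                  ring
      _ = h 0 := tsum_ite_eq (0 : Fin r → ℕ) (fun _ => h 0)
      _ = Complex.log (riemannZeta s) := by
          have : g 0 = s := by
            simp [hg_def]
          rw [hh_def]
          simp only []
          rw [this]
  rw [hkey, Complex.exp_log (riemannZeta_ne_zero_of_one_lt_re hs)]
end

section
/- Let r ≥ 1 and let ω_1, …, ω_r be complex numbers with Re(ω_j) > 0 for all j. Then there exists a function F : ℂ → ℂ which is meromorphic on all of ℂ and satisfies F(s) = ∏_{n_1,…,n_r = 0}^∞ ζ(s + n_1ω_1 + ⋯ + n_rω_r) for every s with Re(s) > 1. -/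
open Complex Filter Topology

namespace HRZ

noncomputable def K : ℝ := ∑' n : ℕ, ((n : ℝ) + 2) ^ (-2 : ℝ)

lemma summable_K : Summable (fun n : ℕ => ((n : ℝ) + 2) ^ (-2 : ℝ)) := by
  have h : Summable (fun n : ℕ => ((n : ℝ)) ^ (-2 : ℝ)) :=
    Real.summable_nat_rpow.mpr (by norm_num)
  have h2 := (summable_nat_add_iff 2).mpr h
  refine h2.congr fun n => ?_
  push_cast
  ring_nf

lemma K_nonneg : 0 ≤ K :=
  tsum_nonneg fun n => Real.rpow_nonneg (by positivity) _

noncomputable def T : ℝ := max 2 (Real.logb 2 (8 * K + 8))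

lemma two_le_T : 2 ≤ T := le_max_left _ _

lemma rpow_T_large {σ : ℝ} (hσ : T ≤ σ) : 8 * K + 8 ≤ (2:ℝ) ^ σ := by
  have h1 : Real.logb 2 (8 * K + 8) ≤ σ := le_trans (le_max_right _ _) hσ
  have h2 : (2:ℝ) ^ Real.logb 2 (8 * K + 8) ≤ (2:ℝ) ^ σ :=
    Real.rpow_le_rpow_of_exponent_le one_le_two h1
  rwa [Real.rpow_logb two_pos (by norm_num) (by nlinarith [K_nonneg])] at h2

lemma term_bound (n : ℕ) {σ : ℝ} (hσ : 2 ≤ σ) :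
    ((n:ℝ)+2) ^ (-σ) ≤ ((n:ℝ)+2) ^ (-2 : ℝ) * (2:ℝ) ^ (2 - σ) := by
  have hb : (2:ℝ) ≤ (n:ℝ)+2 := by
    have : (0:ℝ) ≤ (n:ℝ) := Nat.cast_nonneg n
    linarith
  have h1 : ((n:ℝ)+2) ^ (-σ) = ((n:ℝ)+2) ^ (-2 : ℝ) * ((n:ℝ)+2) ^ (2 - σ) := by
    rw [← Real.rpow_add (by linarith)]
    ring_nf
  rw [h1]
  have h2 : ((n:ℝ)+2) ^ (2 - σ) ≤ (2:ℝ) ^ (2 - σ) :=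
    Real.rpow_le_rpow_of_nonpos two_pos hb (by linarith)
  exact mul_le_mul_of_nonneg_left h2 (Real.rpow_nonneg (by linarith) _)

lemma summable_shift_norm {z : ℂ} (hz : 1 < z.re) :
    Summable (fun n : ℕ => ‖1 / ((n : ℂ) + 2) ^ z‖) := by
  have h : Summable (fun n : ℕ => ((n : ℝ)) ^ (-z.re)) :=
    Real.summable_nat_rpow.mpr (by linarith)
  have h2 := (summable_nat_add_iff 2).mpr h
  refine h2.congr fun n => ?_
  have hcast : ((n : ℂ) + 2) = ((n + 2 : ℕ) : ℂ) := by push_cast; ring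
  rw [hcast, norm_div, norm_one, norm_natCast_cpow_of_pos (by omega),
    Real.rpow_neg (by positivity), one_div]

lemma zeta_sub_one_eq {z : ℂ} (hz : 1 < z.re) :
    riemannZeta z - 1 = ∑' n : ℕ, 1 / ((n : ℂ) + 2) ^ z := by
  have hs : Summable (fun n : ℕ => 1 / ((n : ℂ) + 1) ^ z) := by
    apply Summable.of_norm
    have h : Summable (fun n : ℕ => ((n : ℝ)) ^ (-z.re)) :=
      Real.summable_nat_rpow.mpr (by linarith)
    have h2 := (summable_nat_add_iff 1).mpr h
    refine h2.congr fun n => ?_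
    have hcast : ((n : ℂ) + 1) = ((n + 1 : ℕ) : ℂ) := by push_cast; ring
    rw [hcast, norm_div, norm_one, norm_natCast_cpow_of_pos (by omega),
      Real.rpow_neg (by positivity), one_div]
  rw [zeta_eq_tsum_one_div_nat_add_one_cpow hz, hs.tsum_eq_zero_add]
  have h0 : 1 / ((0 : ℕ) + 1 : ℂ) ^ z = 1 := by norm_num
  rw [h0]
  rw [add_sub_cancel_left]
  refine tsum_congr fun n => ?_
  push_cast
  ring_nf

lemma zeta_sub_one_bound {z : ℂ} (hz : 2 ≤ z.re) :
    ‖riemannZeta z - 1‖ ≤ K * (2:ℝ) ^ (2 - z.re) := by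
  have hz1 : 1 < z.re := by linarith
  rw [zeta_sub_one_eq hz1]
  refine le_trans (norm_tsum_le_tsum_norm (summable_shift_norm hz1)) ?_
  have hterm : ∀ n : ℕ, ‖1 / ((n : ℂ) + 2) ^ z‖ ≤ ((n:ℝ)+2) ^ (-2 : ℝ) * (2:ℝ) ^ (2 - z.re) := by
    intro n
    have hcast : ((n : ℂ) + 2) = ((n + 2 : ℕ) : ℂ) := by push_cast; ring
    rw [hcast, norm_div, norm_one, norm_natCast_cpow_of_pos (by omega),
      Real.rpow_neg (by positivity), one_div]
    have h2 := term_bound n hz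
    have hc : ((n+2:ℕ):ℝ) = (n:ℝ)+2 := by push_cast; ring
    rw [hc]
    rwa [Real.rpow_neg (by positivity : (0:ℝ) ≤ (n:ℝ)+2) z.re,
      Real.rpow_neg (by positivity : (0:ℝ) ≤ (n:ℝ)+2) (2:ℝ)] at h2
  refine le_trans (Summable.tsum_le_tsum hterm (summable_shift_norm hz1)
    (summable_K.mul_right _)) ?_
  rw [tsum_mul_right]
  exact le_of_eq rfl

lemma zeta_near_one {z : ℂ} (hz : T ≤ z.re) :
    ‖riemannZeta z - 1‖ ≤ 1/2 := by
  have h2 : 2 ≤ z.re := le_trans two_le_T hz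
  have hb := zeta_sub_one_bound h2
  have hK := K_nonneg
  have hlarge := rpow_T_large hz
  have hpos : (0:ℝ) < (2:ℝ) ^ z.re := Real.rpow_pos_of_pos two_pos _
  have he : (2:ℝ) ^ (2 - z.re) = 4 / (2:ℝ) ^ z.re := by
    rw [Real.rpow_sub two_pos]
    norm_num
  rw [he] at hb
  refine le_trans hb ?_
  have heq : K * (4 / (2:ℝ) ^ z.re) = (4 * K) / (2:ℝ) ^ z.re := by ring
  rw [heq, div_le_iff₀ hpos]
  nlinarith

lemma zeta_props {z : ℂ} (hz : T ≤ z.re) :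
    riemannZeta z ≠ 0 ∧ riemannZeta z ∈ Complex.slitPlane ∧
      ‖Complex.log (riemannZeta z)‖ ≤ (6 * K) * (2:ℝ) ^ (-z.re) := by
  have h2 : 2 ≤ z.re := le_trans two_le_T hz
  have hhalf := zeta_near_one hz
  have hre : (1:ℝ)/2 ≤ (riemannZeta z).re := by
    have h1 : |(riemannZeta z - 1).re| ≤ 1/2 :=
      le_trans (Complex.abs_re_le_norm _) hhalf
    have h3 := abs_le.mp h1
    simp only [Complex.sub_re, Complex.one_re] at h3
    linarith [h3.1]
  have hne : riemannZeta z ≠ 0 := by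
    intro h
    rw [h] at hre
    norm_num at hre
  refine ⟨hne, Complex.mem_slitPlane_iff.mpr (Or.inl (by linarith)), ?_⟩
  have hw : riemannZeta z = 1 + (riemannZeta z - 1) := by ring
  have hlog := Complex.norm_log_one_add_half_le_self hhalf
  rw [← hw] at hlog
  refine le_trans hlog ?_
  have hb := zeta_sub_one_bound h2
  have he : (2:ℝ) ^ (2 - z.re) = 4 * (2:ℝ) ^ (-z.re) := by
    rw [Real.rpow_sub two_pos, Real.rpow_neg (le_of_lt two_pos)]
    norm_num
    ring
  rw [he] at hb
  nlinarith [K_nonneg, Real.rpow_nonneg (le_of_lt two_pos) (-z.re), norm_nonneg (riemannZeta z - 1)]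

lemma summable_pi_geom : ∀ (r : ℕ) (c : Fin r → ℝ), (∀ j, 0 ≤ c j) → (∀ j, c j < 1) →
    Summable (fun n : Fin r → ℕ => ∏ j, c j ^ n j) := by
  intro r
  induction r with
  | zero =>
    intro c _ _
    haveI : Unique (Fin 0 → ℕ) := ⟨⟨fun j => j.elim0⟩, fun f => funext fun j => j.elim0⟩
    exact (hasSum_single (f := fun n : Fin 0 → ℕ => ∏ j, c j ^ n j) default
      (fun b hb => absurd (Subsingleton.elim b default) hb)).summable
  | succ r ih =>
    intro c h0 h1
    have key : Summable (fun p : ℕ × (Fin r → ℕ) =>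
        (c 0 ^ p.1) * ∏ j : Fin r, (c j.succ) ^ (p.2 j)) := by
      have hgeo : Summable (fun a : ℕ => c 0 ^ a) := summable_geometric_of_lt_one (h0 0) (h1 0)
      have hih := ih (fun j => c j.succ) (fun j => h0 _) (fun j => h1 _)
      exact Summable.mul_of_nonneg (f := fun a : ℕ => c 0 ^ a)
        (g := fun n : Fin r → ℕ => ∏ j, (c j.succ) ^ n j) hgeo hih
        (fun a => pow_nonneg (h0 0) _)
        (fun b => Finset.prod_nonneg fun j _ => pow_nonneg (h0 _) _)
    have := ((Fin.consEquiv (fun _ => ℕ)).symm.summable_iff (f := fun p : ℕ × (Fin r → ℕ) =>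
        (c 0 ^ p.1) * ∏ j : Fin r, (c j.succ) ^ (p.2 j))).mpr key
    refine this.congr fun n => ?_
    simp only [Function.comp]
    rw [Fin.prod_univ_succ]
    rfl

lemma meromorphicAt_riemannZeta (z : ℂ) : MeromorphicAt riemannZeta z := by
  by_cases hz : z = 1
  · subst hz
    set g : ℂ → ℂ := Function.update (fun w => (w - 1) * riemannZeta w) 1 1 with hg
    have hgan : AnalyticAt ℂ g 1 := by
      apply Complex.analyticAt_of_differentiable_on_punctured_nhds_of_continuousAt
      · filter_upwards [self_mem_nhdsWithin] with w hw
        have hww : w ≠ 1 := hw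
        have heq : ∀ᶠ u in 𝓝 w, g u = (u - 1) * riemannZeta u := by
          filter_upwards [isOpen_ne.mem_nhds hww] with u hu
          exact Function.update_of_ne hu _ _
        refine DifferentiableAt.congr_of_eventuallyEq ?_ heq
        exact (differentiableAt_id.sub_const 1).mul (differentiableAt_riemannZeta hww)
      · have hlim : Tendsto g (𝓝[≠] 1) (𝓝 1) := by
          refine riemannZeta_residue_one.congr' ?_
          filter_upwards [self_mem_nhdsWithin] with w hw
          rw [hg, Function.update_of_ne hw]
        have hval : g 1 = 1 := Function.update_self _ _ _
        rw [ContinuousAt, hval]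
        nth_rewrite 1 [← nhdsNE_sup_pure 1]
        rw [tendsto_sup]
        refine ⟨hlim, ?_⟩
        have h := tendsto_pure_nhds g 1
        rwa [hval] at h
    have hm : MeromorphicAt (fun w => g w / (w - 1)) 1 :=
      hgan.meromorphicAt.div ((analyticAt_id.sub analyticAt_const).meromorphicAt)
    refine hm.congr ?_
    filter_upwards [self_mem_nhdsWithin] with w hw
    have hww : (w : ℂ) ≠ 1 := hw
    rw [hg, Function.update_of_ne hww, mul_comm, mul_div_assoc,
      div_self (sub_ne_zero.mpr hww), mul_one]
  · have : AnalyticAt ℂ riemannZeta z := by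
      refine DifferentiableOn.analyticAt (s := {w : ℂ | w ≠ 1})
        (fun w hw => (differentiableAt_riemannZeta hw).differentiableWithinAt) ?_
      exact isOpen_ne.mem_nhds hz
    exact this.meromorphicAt

lemma meromorphicAt_zeta_shift (a : ℂ) (s0 : ℂ) :
    MeromorphicAt (fun s => riemannZeta (s + a)) s0 := by
  obtain ⟨n, hn⟩ := meromorphicAt_riemannZeta (s0 + a)
  refine ⟨n, ?_⟩
  have ha : AnalyticAt ℂ (fun s : ℂ => s + a) s0 := analyticAt_id.add analyticAt_const
  have hcomp : AnalyticAt ℂ ((fun w => (w - (s0 + a)) ^ n • riemannZeta w) ∘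
      (fun s : ℂ => s + a)) s0 :=
    AnalyticAt.comp (f := fun s : ℂ => s + a) (x := s0) hn ha
  have heq : (fun z : ℂ => (z - s0) ^ n • (fun s => riemannZeta (s + a)) z) =
      ((fun w => (w - (s0 + a)) ^ n • riemannZeta w) ∘ (fun s : ℂ => s + a)) := by
    funext z
    simp only [Function.comp, smul_eq_mul]
    ring_nf
  rw [heq]
  exact hcomp

section Main

variable {r : ℕ} (ω : Fin r → ℂ) (hω : ∀ j, 0 < (ω j).re)

noncomputable def Lf (n : Fin r → ℕ) : ℂ := ∑ j, (n j : ℂ) * ω j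

lemma re_Lf (n : Fin r → ℕ) : (Lf ω n).re = ∑ j, (n j : ℝ) * (ω j).re := by
  rw [Lf, Complex.re_sum]
  refine Finset.sum_congr rfl fun j _ => ?_
  simp [Complex.mul_re]

lemma geom_eq (n : Fin r → ℕ) :
    (2:ℝ) ^ (-(Lf ω n).re) = ∏ j, ((2:ℝ) ^ (-(ω j).re)) ^ (n j) := by
  rw [re_Lf]
  have hneg : -(∑ j, (n j : ℝ) * (ω j).re) = ∑ j, -((n j : ℝ) * (ω j).re) := by
    simp
  rw [hneg, Real.rpow_sum_of_pos two_pos]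
  refine Finset.prod_congr rfl fun j _ => ?_
  rw [← Real.rpow_natCast ((2:ℝ) ^ (-(ω j).re)) (n j), ← Real.rpow_mul (le_of_lt two_pos)]
  congr 1
  ring

include hω

lemma re_Lf_nonneg (n : Fin r → ℕ) : 0 ≤ (Lf ω n).re := by
  rw [re_Lf]
  exact Finset.sum_nonneg fun j _ => mul_nonneg (Nat.cast_nonneg _) (le_of_lt (hω j))

lemma summable_geomL : Summable (fun n : Fin r → ℕ => (2:ℝ) ^ (-(Lf ω n).re)) := by
  have h := summable_pi_geom r (fun j => (2:ℝ) ^ (-(ω j).re))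
    (fun j => Real.rpow_nonneg (le_of_lt two_pos) _)
    (fun j => Real.rpow_lt_one_of_one_lt_of_neg one_lt_two (neg_lt_zero.mpr (hω j)))
  exact h.congr fun n => (geom_eq ω n).symm

lemma finite_AN (N : ℕ) : {n : Fin r → ℕ | (Lf ω n).re ≤ N + T}.Finite := by
  have h := (summable_geomL ω hω).tendsto_cofinite_zero
  have hpos : (0:ℝ) < (2:ℝ) ^ (-((N:ℝ) + T)) := Real.rpow_pos_of_pos two_pos _
  have hev : ∀ᶠ n in Filter.cofinite, (2:ℝ) ^ (-(Lf ω n).re) < (2:ℝ) ^ (-((N:ℝ) + T)) :=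
    h.eventually_lt_const hpos
  refine Set.Finite.subset (Filter.eventually_cofinite.mp hev) ?_
  intro n hn
  simp only [Set.mem_setOf_eq, not_lt]
  refine Real.rpow_le_rpow_of_exponent_le one_le_two ?_
  simp only [Set.mem_setOf_eq] at hn
  linarith

noncomputable def AN (N : ℕ) : Finset (Fin r → ℕ) := (finite_AN ω hω N).toFinset

lemma mem_AN {N : ℕ} {n : Fin r → ℕ} : n ∈ AN ω hω N ↔ (Lf ω n).re ≤ N + T := by
  rw [AN, Set.Finite.mem_toFinset]
  rfl

lemma AN_mono {N M : ℕ} (h : N ≤ M) : AN ω hω N ⊆ AN ω hω M := by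
  intro n hn
  rw [mem_AN] at hn ⊢
  have : (N:ℝ) ≤ (M:ℝ) := Nat.cast_le.mpr h
  linarith

lemma not_mem_AN {N : ℕ} {n : Fin r → ℕ} (hn : n ∉ AN ω hω N) {s : ℂ}
    (hs : -(N:ℝ) < s.re) : T ≤ (s + Lf ω n).re := by
  rw [mem_AN] at hn
  push_neg at hn
  rw [Complex.add_re]
  linarith

noncomputable def ee (N : ℕ) (s : ℂ) (n : Fin r → ℕ) : ℂ :=
  if n ∈ AN ω hω N then 0 else Complex.log (riemannZeta (s + Lf ω n))

lemma norm_ee_le {N : ℕ} {s : ℂ} (hs : -(N:ℝ) < s.re) (n : Fin r → ℕ) :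
    ‖ee ω hω N s n‖ ≤ (6 * K * (2:ℝ) ^ (N:ℝ)) * (2:ℝ) ^ (-(Lf ω n).re) := by
  have hK := K_nonneg
  have hL := Real.rpow_nonneg (le_of_lt two_pos) (-(Lf ω n).re)
  have hNn := Real.rpow_nonneg (le_of_lt two_pos) ((N:ℝ))
  rw [ee]
  split_ifs with h
  · simp only [norm_zero]
    positivity
  · have hT := not_mem_AN ω hω h hs
    have hb := (zeta_props hT).2.2
    refine le_trans hb ?_
    rw [Complex.add_re, neg_add, Real.rpow_add two_pos]
    have h2 : (2:ℝ) ^ (-s.re) ≤ (2:ℝ) ^ ((N:ℝ)) :=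
      Real.rpow_le_rpow_of_exponent_le one_le_two (by linarith)
    have h4 := mul_le_mul_of_nonneg_right h2 hL
    have h5 := mul_le_mul_of_nonneg_left h4 (by positivity : (0:ℝ) ≤ 6 * K)
    nlinarith [h5]

lemma summable_ee_norm {N : ℕ} {s : ℂ} (hs : -(N:ℝ) < s.re) :
    Summable (fun n => ‖ee ω hω N s n‖) :=
  Summable.of_nonneg_of_le (fun n => norm_nonneg _) (fun n => norm_ee_le ω hω hs n)
    ((summable_geomL ω hω).mul_left _)

lemma summable_ee {N : ℕ} {s : ℂ} (hs : -(N:ℝ) < s.re) :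
    Summable (ee ω hω N s) :=
  (summable_ee_norm ω hω hs).of_norm

noncomputable def gN (N : ℕ) (s : ℂ) : ℂ := ∑' n, ee ω hω N s n

noncomputable def FN (N : ℕ) (s : ℂ) : ℂ :=
  (∏ n ∈ AN ω hω N, riemannZeta (s + Lf ω n)) * Complex.exp (gN ω hω N s)

noncomputable def Fglob (s : ℂ) : ℂ := FN ω hω (⌈-s.re⌉₊ + 1) s

lemma FN_eq {N M : ℕ} (hNM : N ≤ M) {s : ℂ} (hs : -(N:ℝ) < s.re) :
    FN ω hω N s = FN ω hω M s := by
  classical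
  have hsM : -(M:ℝ) < s.re := by
    have : (N:ℝ) ≤ (M:ℝ) := Nat.cast_le.mpr hNM
    linarith
  have hsub : AN ω hω N ⊆ AN ω hω M := AN_mono ω hω hNM
  set D := AN ω hω M \ AN ω hω N with hD
  have hptw : ∀ n, ee ω hω N s n = ee ω hω M s n +
      (if n ∈ D then Complex.log (riemannZeta (s + Lf ω n)) else 0) := by
    intro n
    rw [ee, ee, hD]
    by_cases h1 : n ∈ AN ω hω N
    · rw [if_pos h1, if_pos (hsub h1), if_neg (by simp [Finset.mem_sdiff, h1])]
      ring
    · by_cases h2 : n ∈ AN ω hω M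
      · rw [if_neg h1, if_pos h2, if_pos (Finset.mem_sdiff.mpr ⟨h2, h1⟩)]
        ring
      · rw [if_neg h1, if_neg h2, if_neg (by simp [Finset.mem_sdiff, h2])]
        ring
  have hsumM : Summable (ee ω hω M s) := summable_ee ω hω hsM
  have hind : Summable (fun n => (if n ∈ D then Complex.log (riemannZeta (s + Lf ω n)) else 0)) :=
    summable_of_ne_finset_zero (s := D) (fun n hn => if_neg hn)
  have hgN : gN ω hω N s = gN ω hω M s + ∑ n ∈ D, Complex.log (riemannZeta (s + Lf ω n)) := by
    rw [gN, gN]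
    calc ∑' n, ee ω hω N s n
        = ∑' n, (ee ω hω M s n +
            (if n ∈ D then Complex.log (riemannZeta (s + Lf ω n)) else 0)) := tsum_congr hptw
      _ = (∑' n, ee ω hω M s n) +
            ∑' n, (if n ∈ D then Complex.log (riemannZeta (s + Lf ω n)) else 0) :=
          Summable.tsum_add hsumM hind
      _ = (∑' n, ee ω hω M s n) + ∑ n ∈ D, Complex.log (riemannZeta (s + Lf ω n)) := by
          rw [tsum_eq_sum (s := D) (fun n hn => if_neg hn)]
          congr 1
          exact Finset.sum_congr rfl fun n hn => if_pos hn
  have hDzeta : ∀ n ∈ D, riemannZeta (s + Lf ω n) ≠ 0 := by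
    intro n hn
    have hnN : n ∉ AN ω hω N := (Finset.mem_sdiff.mp hn).2
    exact (zeta_props (not_mem_AN ω hω hnN hs)).1
  have hexpD : Complex.exp (∑ n ∈ D, Complex.log (riemannZeta (s + Lf ω n)))
      = ∏ n ∈ D, riemannZeta (s + Lf ω n) := by
    rw [Complex.exp_sum]
    exact Finset.prod_congr rfl fun n hn => Complex.exp_log (hDzeta n hn)
  rw [FN, FN, hgN, Complex.exp_add, hexpD, ← Finset.prod_sdiff hsub, ← hD]
  ring

omit hω in
lemma isOpen_UN (N : ℕ) : IsOpen {s : ℂ | -(N:ℝ) < s.re} :=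
  isOpen_lt continuous_const Complex.continuous_re

lemma diff_gN (N : ℕ) : DifferentiableOn ℂ (gN ω hω N) {s : ℂ | -(N:ℝ) < s.re} := by
  refine differentiableOn_tsum_of_summable_norm
    (u := fun n => (6 * K * (2:ℝ) ^ (N:ℝ)) * (2:ℝ) ^ (-(Lf ω n).re))
    ((summable_geomL ω hω).mul_left _) ?_ (isOpen_UN N) ?_
  · intro n
    by_cases h : n ∈ AN ω hω N
    · simp only [ee, if_pos h]
      exact differentiableOn_const 0
    · simp only [ee, if_neg h]
      intro s hs
      have hsre : -(N:ℝ) < s.re := hs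
      have hT : T ≤ (s + Lf ω n).re := not_mem_AN ω hω h hsre
      have h1 : s + Lf ω n ≠ 1 := by
        intro hc
        have h2 := congrArg Complex.re hc
        rw [Complex.one_re] at h2
        have h3 := two_le_T
        linarith
      have hζ := zeta_props hT
      have hd : DifferentiableAt ℂ (fun s : ℂ => Complex.log (riemannZeta (s + Lf ω n))) s := by
        have hd1 : DifferentiableAt ℂ (fun s : ℂ => s + Lf ω n) s :=
          differentiableAt_id.add_const _
        have hd2 : DifferentiableAt ℂ riemannZeta (s + Lf ω n) := differentiableAt_riemannZeta h1
        exact (Complex.differentiableAt_log hζ.2.1).comp s (hd2.comp s hd1)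
      exact hd.differentiableWithinAt
  · intro n w hw
    exact norm_ee_le ω hω hw n

omit hω in
lemma merom_prod {ι : Type*} (A : Finset ι) (f : ι → ℂ → ℂ) (x : ℂ)
    (h : ∀ i, MeromorphicAt (f i) x) :
    MeromorphicAt (fun z => ∏ i ∈ A, f i z) x := by
  classical
  induction A using Finset.induction_on with
  | empty => simpa using MeromorphicAt.const 1 x
  | @insert a s ha ih =>
    have : (fun z => ∏ i ∈ insert a s, f i z) = fun z => f a z * ∏ i ∈ s, f i z := by
      funext z
      rw [Finset.prod_insert ha]
    rw [this]
    exact (h a).mul ih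

lemma merom_FN (N : ℕ) {s0 : ℂ} (hs0 : -(N:ℝ) < s0.re) : MeromorphicAt (FN ω hω N) s0 := by
  have h1 : MeromorphicAt (fun s => ∏ n ∈ AN ω hω N, riemannZeta (s + Lf ω n)) s0 :=
    merom_prod _ _ _ (fun n => meromorphicAt_zeta_shift (Lf ω n) s0)
  have hg : AnalyticAt ℂ (gN ω hω N) s0 :=
    (diff_gN ω hω N).analyticAt ((isOpen_UN N).mem_nhds hs0)
  have h2 : AnalyticAt ℂ (fun s => Complex.exp (gN ω hω N s)) s0 := by
    have hexp : AnalyticAt ℂ Complex.exp (gN ω hω N s0) :=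
      Complex.differentiable_exp.differentiableOn.analyticAt Filter.univ_mem
    exact hexp.comp hg
  exact h1.mul h2.meromorphicAt

end Main

end HRZ

/-- The higher Riemann zeta function of weight `ω` extends to a function meromorphic on
all of `ℂ`. -/
theorem higherRiemannZeta_lattice_meromorphic_continuation (r : ℕ) (hr : 1 ≤ r)
    (ω : Fin r → ℂ) (hω : ∀ j, 0 < (ω j).re) :
    ∃ F : ℂ → ℂ, MeromorphicOn F Set.univ ∧
      ∀ s : ℂ, 1 < s.re →
        F s = ∏' n : Fin r → ℕ, riemannZeta (s + ∑ j, (n j : ℂ) * ω j) := by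
  classical
  refine ⟨HRZ.Fglob ω hω, ?_, ?_⟩
  · intro s0 _
    set M : ℕ := ⌈-s0.re + 1⌉₊ + 1 with hM
    have hs0M : -(M:ℝ) < s0.re := by
      have h1 : -s0.re + 1 ≤ (⌈-s0.re + 1⌉₊ : ℝ) := Nat.le_ceil _
      have h2 : (M:ℝ) = (⌈-s0.re + 1⌉₊ : ℝ) + 1 := by rw [hM]; push_cast; ring
      linarith
    have hmer := HRZ.merom_FN ω hω M hs0M
    refine hmer.congr ?_
    have hV : {s : ℂ | s0.re - 1 < s.re} ∈ 𝓝[≠] s0 :=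
      nhdsWithin_le_nhds ((isOpen_lt continuous_const Complex.continuous_re).mem_nhds
        (show s0.re - 1 < s0.re by linarith))
    filter_upwards [hV] with s hs
    have hs' : s0.re - 1 < s.re := hs
    have hNs : -(((⌈-s.re⌉₊ + 1 : ℕ)):ℝ) < s.re := by
      have := Nat.le_ceil (-s.re)
      push_cast
      linarith
    have hle : (⌈-s.re⌉₊ + 1 : ℕ) ≤ M := by
      have h1 : ⌈-s.re⌉₊ ≤ ⌈-s0.re + 1⌉₊ := Nat.ceil_le_ceil (by linarith)
      omega
    rw [HRZ.Fglob]
    exact (HRZ.FN_eq ω hω hle hNs).symm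
  · intro s hs
    have hs0 : -((0:ℕ):ℝ) < s.re := by push_cast; linarith
    have h1 : HRZ.Fglob ω hω s = HRZ.FN ω hω 0 s := by
      rw [HRZ.Fglob]
      exact (HRZ.FN_eq ω hω (Nat.zero_le _) hs0).symm
    have hzne : ∀ (x : ℂ), 1 < x.re → ∀ n : Fin r → ℕ,
        riemannZeta (x + HRZ.Lf ω n) ≠ 0 := by
      intro x hx n
      refine riemannZeta_ne_zero_of_one_le_re ?_
      have := HRZ.re_Lf_nonneg ω hω n
      rw [Complex.add_re]
      linarith
    have hsum_log : ∀ x : ℂ, 1 < x.re →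
        Summable (fun n : Fin r → ℕ => Complex.log (riemannZeta (x + HRZ.Lf ω n))) := by
      intro x hx
      have hx0 : -((0:ℕ):ℝ) < x.re := by push_cast; linarith
      have hee := HRZ.summable_ee ω hω (N := 0) hx0
      have h2 : Summable (fun n : Fin r → ℕ =>
          if n ∈ HRZ.AN ω hω 0 then Complex.log (riemannZeta (x + HRZ.Lf ω n)) else 0) :=
        summable_of_ne_finset_zero (s := HRZ.AN ω hω 0) (fun n hn => if_neg hn)
      refine (hee.add h2).congr fun n => ?_
      rw [HRZ.ee]
      by_cases h : n ∈ HRZ.AN ω hω 0 <;> simp [h]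
    have key := Complex.cexp_tsum_eq_tprod
      (f := fun (n : Fin r → ℕ) => riemannZeta (s + HRZ.Lf ω n))
      (fun n => hzne s hs n) (hsum_log s hs)
    have keyval : Complex.exp (∑' n : Fin r → ℕ, Complex.log (riemannZeta (s + HRZ.Lf ω n)))
        = ∏' n : Fin r → ℕ, riemannZeta (s + HRZ.Lf ω n) := key
    have hsplit : (∑' n : Fin r → ℕ, Complex.log (riemannZeta (s + HRZ.Lf ω n)))
        = (∑ n ∈ HRZ.AN ω hω 0, Complex.log (riemannZeta (s + HRZ.Lf ω n)))
          + HRZ.gN ω hω 0 s := by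
      have hee := HRZ.summable_ee ω hω (N := 0) hs0
      have h2 : Summable (fun n : Fin r → ℕ =>
          if n ∈ HRZ.AN ω hω 0 then Complex.log (riemannZeta (s + HRZ.Lf ω n)) else 0) :=
        summable_of_ne_finset_zero (s := HRZ.AN ω hω 0) (fun n hn => if_neg hn)
      have hptw : ∀ n : Fin r → ℕ, Complex.log (riemannZeta (s + HRZ.Lf ω n))
          = (if n ∈ HRZ.AN ω hω 0 then Complex.log (riemannZeta (s + HRZ.Lf ω n)) else 0)
            + HRZ.ee ω hω 0 s n := by
        intro n
        rw [HRZ.ee]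
        by_cases h : n ∈ HRZ.AN ω hω 0 <;> simp [h]
      calc (∑' n : Fin r → ℕ, Complex.log (riemannZeta (s + HRZ.Lf ω n)))
          = ∑' n : Fin r → ℕ,
              ((if n ∈ HRZ.AN ω hω 0 then Complex.log (riemannZeta (s + HRZ.Lf ω n)) else 0)
                + HRZ.ee ω hω 0 s n) := tsum_congr hptw
        _ = (∑' n : Fin r → ℕ,
              (if n ∈ HRZ.AN ω hω 0 then Complex.log (riemannZeta (s + HRZ.Lf ω n)) else 0))
              + ∑' n, HRZ.ee ω hω 0 s n := Summable.tsum_add h2 hee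
        _ = _ := by
              rw [tsum_eq_sum (s := HRZ.AN ω hω 0) (fun n hn => if_neg hn)]
              congr 1
              · exact Finset.sum_congr rfl fun n hn => if_pos hn
    have hFN : HRZ.FN ω hω 0 s
        = Complex.exp (∑' n : Fin r → ℕ, Complex.log (riemannZeta (s + HRZ.Lf ω n))) := by
      rw [HRZ.FN, hsplit, Complex.exp_add, Complex.exp_sum]
      congr 1
      exact (Finset.prod_congr rfl fun n _ => (Complex.exp_log (hzne s hs n)).symm)
    rw [h1, hFN, keyval]
    rfl
end
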